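/- (Proposition 5.2) An oriented graph is a local K-graph if and only if it is a K-graph. -/

import Mathlib

namespace PluralCuts

/-- The two horizontal directions: west and east. -/
inductive XDir : Type
  | W
  | E
deriving DecidableEq

/-- The two vertical directions: north and south. -/
inductive YDir : Type
  | N
  | S
deriving DecidableEq

/-- The other element of `{W, E}`. -/
def XDir.other : XDir → XDir
  | .W => .E
  | .E => .W

/-- A helper choosing between two values according to an `XDir`. -/
def pick {α : Type*} (w e : α) : XDir → α
  | .W => w
  | .E => e

/-- A digraph on (a finite set of) natural-number vertices: a finite set of
vertices together with a finite set of edges (ordered pairs). -/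
structure DG : Type where
  verts : Finset ℕ
  edges : Finset (ℕ × ℕ)

namespace DG

/-- `D` is an oriented graph: edges lie between vertices, the edge relation is
irreflexive and antisymmetric, and the vertex set is nonempty. -/
def IsOriented (D : DG) : Prop :=
  (∀ e ∈ D.edges, e.1 ∈ D.verts ∧ e.2 ∈ D.verts) ∧
  (∀ e ∈ D.edges, e.1 ≠ e.2) ∧
  (∀ a b : ℕ, (a, b) ∈ D.edges → (b, a) ∉ D.edges) ∧
  D.verts.Nonempty

/-- A `W`-vertex: no edge ends in it. -/
def isWVert (D : DG) (a : ℕ) : Prop := a ∈ D.verts ∧ ∀ b, (b, a) ∉ D.edges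

/-- An `E`-vertex: no edge begins in it. -/
def isEVert (D : DG) (a : ℕ) : Prop := a ∈ D.verts ∧ ∀ b, (a, b) ∉ D.edges

/-- An inner vertex: some edge ends in it and some edge begins in it. -/
def isInner (D : DG) (a : ℕ) : Prop :=
  a ∈ D.verts ∧ (∃ b, (b, a) ∈ D.edges) ∧ (∃ b, (a, b) ∈ D.edges)

/-- A `W`-edge: an edge beginning in a `W`-vertex. -/
def isWEdge (D : DG) (e : ℕ × ℕ) : Prop := e ∈ D.edges ∧ D.isWVert e.1

/-- An `E`-edge: an edge ending in an `E`-vertex. -/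
def isEEdge (D : DG) (e : ℕ × ℕ) : Prop := e ∈ D.edges ∧ D.isEVert e.2

/-- An `X`-edge, for `X ∈ {W, E}`. -/
def isXEdge (D : DG) : XDir → (ℕ × ℕ) → Prop
  | .W => D.isWEdge
  | .E => D.isEEdge

/-- An inner edge: it begins and ends in inner vertices. -/
def isInnerEdge (D : DG) (e : ℕ × ℕ) : Prop :=
  e ∈ D.edges ∧ D.isInner e.1 ∧ D.isInner e.2

/-- A functional `W`-edge `(a,b)`: `(a,c) ∈ D` implies `b = c`. -/
def funcWEdge (D : DG) (e : ℕ × ℕ) : Prop :=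
  D.isWEdge e ∧ ∀ c, (e.1, c) ∈ D.edges → c = e.2

/-- A functional `E`-edge `(b,a)`: `(c,a) ∈ D` implies `b = c`. -/
def funcEEdge (D : DG) (e : ℕ × ℕ) : Prop :=
  D.isEEdge e ∧ ∀ c, (c, e.2) ∈ D.edges → c = e.1

/-- `D` is `W`-`E`-functional: all its `W`-edges and `E`-edges are functional. -/
def WEFunctional (D : DG) : Prop :=
  (∀ e, D.isWEdge e → D.funcWEdge e) ∧ (∀ e, D.isEEdge e → D.funcEEdge e)

/-- Semi-adjacency: `(a,b)` or `(b,a)` is an edge. -/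
def semiAdj (D : DG) (a b : ℕ) : Prop := (a, b) ∈ D.edges ∨ (b, a) ∈ D.edges

/-- A semipath: a nonempty sequence of mutually distinct vertices in which any
two consecutive vertices are semi-adjacent. -/
def IsSemipath (D : DG) (l : List ℕ) : Prop :=
  l ≠ [] ∧ (∀ a ∈ l, a ∈ D.verts) ∧ l.Nodup ∧ l.Chain' D.semiAdj

/-- A path: a nonempty sequence of mutually distinct vertices in which
`(a_i, a_{i+1})` is an edge for consecutive vertices. -/
def IsPath (D : DG) (l : List ℕ) : Prop :=
  l ≠ [] ∧ (∀ a ∈ l, a ∈ D.verts) ∧ l.Nodup ∧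
    l.Chain' (fun a b => (a, b) ∈ D.edges)

/-- A semicycle: a sequence `a_1, ..., a_n` of vertices with `n ≥ 4`,
`a_1 = a_n`, `a_1, ..., a_{n-1}` mutually distinct, and consecutive vertices
semi-adjacent. -/
def IsSemicycle (D : DG) (l : List ℕ) : Prop :=
  4 ≤ l.length ∧ (∀ a ∈ l, a ∈ D.verts) ∧ l.head? = l.getLast? ∧
  l.dropLast.Nodup ∧ l.Chain' D.semiAdj

/-- `D` is weakly connected: every two vertices are joined by a semipath. -/
def WeaklyConnected (D : DG) : Prop :=
  ∀ a ∈ D.verts, ∀ b ∈ D.verts,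
    ∃ l, D.IsSemipath l ∧ l.head? = some a ∧ l.getLast? = some b

/-- `D` is asemicyclic: it has no semicycles. -/
def Asemicyclic (D : DG) : Prop := ∀ l, ¬ D.IsSemicycle l

/-- The cut `D_W[e_W - e_E]D_E`:
`(D_W - {e_W}) ∪ (D_E - {e_E}) ∪ {(e_W.1, e_E.2)}` on the union of the vertex
sets with `e_W.2` and `e_E.1` omitted. -/
def cut (DW DE : DG) (eW eE : ℕ × ℕ) : DG where
  verts := (DW.verts ∪ DE.verts) \ {eW.2, eE.1}
  edges := insert (eW.1, eE.2) ((DW.edges.erase eW) ∪ (DE.edges.erase eE))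

end DG

/-- The type of assignments of four distinguished edges `NW, SW, NE, SE`. -/
abbrev DistE : Type := YDir → XDir → ℕ × ℕ

/-- The type of labellings assigning to (inner) vertices four edges. -/
abbrev Lab : Type := ℕ → YDir → XDir → ℕ × ℕ

/-- `⟨D, ε⟩` is a basic K-graph: `D` is an oriented graph with a single inner
vertex `b`, all edges begin or end in `b`, every other vertex is joined to `b`
by an edge, there is at least one edge ending in `b` and one beginning in `b`,
the distinguished edges `ε Y W` end in `b` and `ε Y E` begin in `b`, and
(XYB): if there are at least two `X`-edges then `NX ≠ SX`. -/
def IsBasicK (D : DG) (ε : DistE) : Prop :=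
  D.IsOriented ∧
  ∃ b ∈ D.verts,
    (∀ e ∈ D.edges, e.1 = b ∨ e.2 = b) ∧
    (∀ v ∈ D.verts, v = b ∨ (v, b) ∈ D.edges ∨ (b, v) ∈ D.edges) ∧
    (∃ a, (a, b) ∈ D.edges) ∧ (∃ c, (b, c) ∈ D.edges) ∧
    (∀ Y : YDir, ε Y XDir.W ∈ D.edges ∧ (ε Y XDir.W).2 = b ∧
      ε Y XDir.E ∈ D.edges ∧ (ε Y XDir.E).1 = b) ∧
    (2 ≤ (D.edges.filter (fun e => e.2 = b)).card →
      ε YDir.N XDir.W ≠ ε YDir.S XDir.W) ∧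
    (2 ≤ (D.edges.filter (fun e => e.1 = b)).card →
      ε YDir.N XDir.E ≠ ε YDir.S XDir.E)

/-- `⟨D, ε⟩` is a basic Q-graph: as a basic K-graph but with no requirement
(XYB) on the distinguished edges. -/
def IsBasicQ (D : DG) (ε : DistE) : Prop :=
  D.IsOriented ∧
  ∃ b ∈ D.verts,
    (∀ e ∈ D.edges, e.1 = b ∨ e.2 = b) ∧
    (∀ v ∈ D.verts, v = b ∨ (v, b) ∈ D.edges ∨ (b, v) ∈ D.edges) ∧
    (∃ a, (a, b) ∈ D.edges) ∧ (∃ c, (b, c) ∈ D.edges) ∧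
    (∀ Y : YDir, ε Y XDir.W ∈ D.edges ∧ (ε Y XDir.W).2 = b ∧
      ε Y XDir.E ∈ D.edges ∧ (ε Y XDir.E).1 = b)

/-- Finite binary trees whose nodes carry an oriented graph, four
distinguished edges, and (at internal nodes) the two cut edges. -/
inductive CTree : Type
  | leaf (D : DG) (ε : DistE)
  | node (D : DG) (ε : DistE) (eW eE : ℕ × ℕ) (l r : CTree)

namespace CTree

/-- The graph at the root of the tree. -/
def rootGraph : CTree → DG
  | .leaf D _ => D
  | .node D _ _ _ _ _ => D

/-- The distinguished edges at the root of the tree. -/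
def dist : CTree → DistE
  | .leaf _ ε => ε
  | .node _ ε _ _ _ _ => ε

/-- The list of graphs-with-distinguished-edges at the leaves of the tree
(the basic K-graphs determining the leaves of a construction). -/
def leaves : CTree → List (DG × DistE)
  | .leaf D ε => [(D, ε)]
  | .node _ _ _ _ l r => l.leaves ++ r.leaves

end CTree

/-- The tree `G_W[e_W - e_E]G_E`, whose root graph is the cut of the root
graphs and whose distinguished edges are given by (XYD). -/
def mkNode (GW GE : CTree) (eW eE : ℕ × ℕ) : CTree :=
  .node (DG.cut GW.rootGraph GE.rootGraph eW eE)
    (fun Y X =>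
      match X with
      | .W => if eE = GE.dist Y XDir.W then GW.dist Y XDir.W else GE.dist Y XDir.W
      | .E => if eW = GW.dist Y XDir.E then GE.dist Y XDir.E else GW.dist Y XDir.E)
    eW eE GW GE

/-- The inductive notion of construction (of a global K-graph). -/
inductive IsConstruction : CTree → Prop
  | leaf (D : DG) (ε : DistE) (h : IsBasicK D ε) : IsConstruction (.leaf D ε)
  | node (D : DG) (ε : DistE) (eW eE : ℕ × ℕ) (GW GE : CTree)
      (hW : IsConstruction GW) (hE : IsConstruction GE)
      (hdisj : Disjoint GW.rootGraph.verts GE.rootGraph.verts)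
      (heW : GW.rootGraph.funcEEdge eW)
      (heE : GE.rootGraph.funcWEdge eE)
      (hD : D = DG.cut GW.rootGraph GE.rootGraph eW eE)
      (hXYC : ∀ Y : YDir, eW = GW.dist Y XDir.E ∨ eE = GE.dist Y XDir.W)
      (hεW : ∀ Y : YDir, ε Y XDir.W =
        if eE = GE.dist Y XDir.W then GW.dist Y XDir.W else GE.dist Y XDir.W)
      (hεE : ∀ Y : YDir, ε Y XDir.E =
        if eW = GW.dist Y XDir.E then GE.dist Y XDir.E else GW.dist Y XDir.E) :
      IsConstruction (.node D ε eW eE GW GE)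

/-- The inductive notion of construction of a global Q-graph: as
`IsConstruction` but with basic Q-graphs at the leaves. -/
inductive IsConstructionQ : CTree → Prop
  | leaf (D : DG) (ε : DistE) (h : IsBasicQ D ε) : IsConstructionQ (.leaf D ε)
  | node (D : DG) (ε : DistE) (eW eE : ℕ × ℕ) (GW GE : CTree)
      (hW : IsConstructionQ GW) (hE : IsConstructionQ GE)
      (hdisj : Disjoint GW.rootGraph.verts GE.rootGraph.verts)
      (heW : GW.rootGraph.funcEEdge eW)
      (heE : GE.rootGraph.funcWEdge eE)
      (hD : D = DG.cut GW.rootGraph GE.rootGraph eW eE)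
      (hXYC : ∀ Y : YDir, eW = GW.dist Y XDir.E ∨ eE = GE.dist Y XDir.W)
      (hεW : ∀ Y : YDir, ε Y XDir.W =
        if eE = GE.dist Y XDir.W then GW.dist Y XDir.W else GE.dist Y XDir.W)
      (hεE : ∀ Y : YDir, ε Y XDir.E =
        if eW = GW.dist Y XDir.E then GE.dist Y XDir.E else GW.dist Y XDir.E) :
      IsConstructionQ (.node D ε eW eE GW GE)

/-- ρ-equivalence of constructions: the least equivalence relation containing
ρ1, ρ2, ρ3 and closed under congruence with respect to cuts. -/
inductive RhoEquiv : CTree → CTree → Prop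
  | rho1 (P Q R : CTree) (eW eE fW fE : ℕ × ℕ)
      (hP : IsConstruction P) (hQ : IsConstruction Q) (hR : IsConstruction R)
      (heW : P.rootGraph.isEEdge eW) (hfW : Q.rootGraph.isEEdge fW)
      (heE : Q.rootGraph.isWEdge eE) (hfE : R.rootGraph.isWEdge fE)
      (h1 : IsConstruction (mkNode (mkNode P Q eW eE) R fW fE))
      (h2 : IsConstruction (mkNode P (mkNode Q R fW fE) eW eE)) :
      RhoEquiv (mkNode (mkNode P Q eW eE) R fW fE)
               (mkNode P (mkNode Q R fW fE) eW eE)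
  | rho2 (P Q R : CTree) (eW eE fW fE : ℕ × ℕ)
      (hP : IsConstruction P) (hQ : IsConstruction Q) (hR : IsConstruction R)
      (heW : P.rootGraph.isEEdge eW) (hfW : P.rootGraph.isEEdge fW)
      (hne : eW ≠ fW)
      (heE : Q.rootGraph.isWEdge eE) (hfE : R.rootGraph.isWEdge fE)
      (h1 : IsConstruction (mkNode (mkNode P Q eW eE) R fW fE))
      (h2 : IsConstruction (mkNode (mkNode P R fW fE) Q eW eE)) :
      RhoEquiv (mkNode (mkNode P Q eW eE) R fW fE)
               (mkNode (mkNode P R fW fE) Q eW eE)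
  | rho3 (P Q R : CTree) (eW eE fW fE : ℕ × ℕ)
      (hP : IsConstruction P) (hQ : IsConstruction Q) (hR : IsConstruction R)
      (heE : P.rootGraph.isWEdge eE) (hfE : P.rootGraph.isWEdge fE)
      (hne : eE ≠ fE)
      (heW : Q.rootGraph.isEEdge eW) (hfW : R.rootGraph.isEEdge fW)
      (h1 : IsConstruction (mkNode R (mkNode Q P eW eE) fW fE))
      (h2 : IsConstruction (mkNode Q (mkNode R P fW fE) eW eE)) :
      RhoEquiv (mkNode R (mkNode Q P eW eE) fW fE)
               (mkNode Q (mkNode R P fW fE) eW eE)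
  | congr (G1 G2 H1 H2 : CTree) (eW eE : ℕ × ℕ)
      (h12 : RhoEquiv G1 G2) (h34 : RhoEquiv H1 H2)
      (hc1 : IsConstruction (mkNode G1 H1 eW eE))
      (hc2 : IsConstruction (mkNode G2 H2 eW eE)) :
      RhoEquiv (mkNode G1 H1 eW eE) (mkNode G2 H2 eW eE)
  | refl (G : CTree) (h : IsConstruction G) : RhoEquiv G G
  | symm {G H : CTree} (h : RhoEquiv G H) : RhoEquiv H G
  | trans {G H K : CTree} (h1 : RhoEquiv G H) (h2 : RhoEquiv H K) :
      RhoEquiv G K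

/-- The class `[G]`: all constructions with the same root graph as `G` whose
leaves are determined by the same basic K-graphs as those of `G`. -/
def classOf (G : CTree) : Set CTree :=
  {H | IsConstruction H ∧ H.rootGraph = G.rootGraph ∧
    ∀ p : DG × DistE, p ∈ H.leaves ↔ p ∈ G.leaves}

/-- Renaming the vertices of a digraph along a function. -/
def DG.rename (f : ℕ → ℕ) (D : DG) : DG where
  verts := D.verts.image f
  edges := D.edges.image (fun e => (f e.1, f e.2))

/-- Renaming the vertices throughout a tree. -/
def CTree.rename (f : ℕ → ℕ) : CTree → CTree
  | .leaf D ε => .leaf (DG.rename f D) (fun Y X => (f (ε Y X).1, f (ε Y X).2))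
  | .node D ε eW eE l r =>
      .node (DG.rename f D) (fun Y X => (f (ε Y X).1, f (ε Y X).2))
        (f eW.1, f eW.2) (f eE.1, f eE.2) (l.rename f) (r.rename f)

/-- σ-equivalence: `H` is obtained from `G` by a bijective renaming of
vertices that fixes the root vertices (so only secondary vertices may be
renamed). -/
def SigmaEquiv (G H : CTree) : Prop :=
  ∃ f : ℕ ≃ ℕ, (∀ v ∈ G.rootGraph.verts, f v = v) ∧ H = G.rename f

/-- The global compass graph `‖G‖`: all constructions σ-equivalent to a
construction in `[G]`. -/
def normClass (G : CTree) : Set CTree :=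
  {H | ∃ K ∈ classOf G, SigmaEquiv K H}

/-- The labelling `L` of `λ(G) = ⟨D, L⟩`, defined by induction on `G`: at a
leaf given by a basic K-graph with inner vertex `b`, `YX(b) = YX(B)`; at a
node, the value is inherited from the appropriate subtree unless it is one of
the two cut edges, in which case it is the new edge introduced by the cut. -/
def lamG : CTree → Lab
  | .leaf _ ε => fun _ => ε
  | .node _ _ eW eE l r => fun a Y X =>
      let v := if a ∈ l.rootGraph.verts then lamG l a Y X else lamG r a Y X
      if v = eW ∨ v = eE then (eW.1, eE.2) else v

/-- `L` assigns to every inner vertex `a` edges `L a Y W` ending in `a` and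
edges `L a Y E` beginning in `a`. -/
def ProperLab (D : DG) (L : Lab) : Prop :=
  ∀ a, D.isInner a → ∀ Y : YDir,
    L a Y XDir.W ∈ D.edges ∧ (L a Y XDir.W).2 = a ∧
    L a Y XDir.E ∈ D.edges ∧ (L a Y XDir.E).1 = a

/-- `⟨D, L⟩` separates `N` from `S`. -/
def SeparatesNS (D : DG) (L : Lab) : Prop :=
  ∀ a, D.isInner a →
    (2 ≤ (D.edges.filter (fun e => e.2 = a)).card →
      L a YDir.N XDir.W ≠ L a YDir.S XDir.W) ∧
    (2 ≤ (D.edges.filter (fun e => e.1 = a)).card →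
      L a YDir.N XDir.E ≠ L a YDir.S XDir.E)

/-- A list `a_1, ..., a_n` is `Y`-decent in `⟨D, L⟩`: `n = 1`, or
`YE(a_1) = (a_1, a_2)`, or `YW(a_n) = (a_{n-1}, a_n)`. -/
def Ydecent (L : Lab) (Y : YDir) (l : List ℕ) : Prop :=
  ∀ a b t, l = a :: b :: t →
    (L a Y XDir.E = (a, b) ∨
      ∃ c d t', l.reverse = d :: c :: t' ∧ L d Y XDir.W = (c, d))

/-- `⟨D, L⟩` is a local compass graph. -/
def IsLocalCompass (D : DG) (L : Lab) : Prop :=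
  D.IsOriented ∧ ProperLab D L ∧
  D.WeaklyConnected ∧ D.Asemicyclic ∧ D.WEFunctional ∧ (∃ a, D.isInner a) ∧
  SeparatesNS D L ∧
  (∀ l, D.IsPath l → Ydecent L YDir.N l ∧ Ydecent L YDir.S l)

/-- A path (list) covers an edge `g` when `g` is a pair of consecutive
vertices of the list. -/
def covers (l : List ℕ) (g : ℕ × ℕ) : Prop := g ∈ l.zip l.tail

/-- A `YX`-edge in `⟨D, L⟩`. -/
def YXedge (D : DG) (L : Lab) (Y : YDir) : XDir → (ℕ × ℕ) → Prop
  | .W, g => g ∈ D.edges ∧ (L g.2 Y XDir.W = g ∨ D.isEEdge g)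
  | .E, g => g ∈ D.edges ∧ (L g.1 Y XDir.E = g ∨ D.isWEdge g)

/-- A proper semipath: a semipath such that neither it nor its reverse is a
path. -/
def ProperSemipath (D : DG) (l : List ℕ) : Prop :=
  D.IsSemipath l ∧ ¬ D.IsPath l ∧ ¬ D.IsPath l.reverse

/-- A transversal edge `(a,b)`: there is a proper semipath beginning with
`a, b` and a proper semipath beginning with `b, a`. -/
def Transversal (D : DG) (e : ℕ × ℕ) : Prop :=
  e ∈ D.edges ∧
  (∃ t, ProperSemipath D (e.1 :: e.2 :: t)) ∧
  (∃ t, ProperSemipath D (e.2 :: e.1 :: t))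

/-- The edge of `D` that connects two semi-adjacent vertices `a` and `b`. -/
def connEdge (D : DG) (a b : ℕ) : ℕ × ℕ :=
  if (a, b) ∈ D.edges then (a, b) else (b, a)

/-- The connecting edges of a list: the edges connecting its consecutive
vertices. -/
def connEdges (D : DG) (l : List ℕ) (e : ℕ × ℕ) : Prop :=
  ∃ p ∈ l.zip l.tail, e = connEdge D p.1 p.2

/-- A bifurcation: three distinct edges with a common vertex. -/
def Bifurcation (D : DG) (e1 e2 e3 : ℕ × ℕ) : Prop :=
  e1 ∈ D.edges ∧ e2 ∈ D.edges ∧ e3 ∈ D.edges ∧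
  e1 ≠ e2 ∧ e1 ≠ e3 ∧ e2 ≠ e3 ∧
  ∃ v, (v = e1.1 ∨ v = e1.2) ∧ (v = e2.1 ∨ v = e2.2) ∧ (v = e3.1 ∨ v = e3.2)

/-- A K-graph: a weakly connected, asemicyclic, `W`-`E`-functional oriented
graph with an inner vertex in which no bifurcation is transversal. -/
def IsKGraph (D : DG) : Prop :=
  D.IsOriented ∧ D.WeaklyConnected ∧ D.Asemicyclic ∧ D.WEFunctional ∧
  (∃ a, D.isInner a) ∧
  ∀ e1 e2 e3, Bifurcation D e1 e2 e3 →
    ¬ (Transversal D e1 ∧ Transversal D e2 ∧ Transversal D e3)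

/-- A Q-graph: a weakly connected, asemicyclic, `W`-`E`-functional oriented
graph with an inner vertex. -/
def IsQGraph (D : DG) : Prop :=
  D.IsOriented ∧ D.WeaklyConnected ∧ D.Asemicyclic ∧ D.WEFunctional ∧
  ∃ a, D.isInner a


namespace Prop52

open List

def yo : YDir → YDir | .N => .S | .S => .N

lemma yo_ne : ∀ y, yo y ≠ y := by intro y; cases y <;> simp [yo]

lemma eq_yo_of_ne : ∀ {y z : YDir}, y ≠ z → y = yo z := by
  intro y z h; cases y <;> cases z <;> simp_all [yo]

lemma ydir_eq_or (Y c : YDir) : Y = c ∨ Y = yo c := by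
  cases Y <;> cases c <;> simp [yo]

variable {D : DG}

lemma edge_ne (hor : D.IsOriented) {a b : ℕ} (h : (a,b) ∈ D.edges) : a ≠ b :=
  hor.2.1 _ h

lemma edge_mem1 (hor : D.IsOriented) {a b : ℕ} (h : (a,b) ∈ D.edges) : a ∈ D.verts :=
  (hor.1 _ h).1

lemma edge_mem2 (hor : D.IsOriented) {a b : ℕ} (h : (a,b) ∈ D.edges) : b ∈ D.verts :=
  (hor.1 _ h).2

lemma edge_antisymm (hor : D.IsOriented) {a b : ℕ} (h : (a,b) ∈ D.edges) :
    (b,a) ∉ D.edges := hor.2.2.1 a b h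

lemma path_single {a : ℕ} (hv : a ∈ D.verts) : D.IsPath [a] :=
  ⟨by simp, by simpa using hv, by simp, by simp [List.Chain']⟩

lemma path_pair (hor : D.IsOriented) {a b : ℕ} (h : (a,b) ∈ D.edges) : D.IsPath [a,b] := by
  refine ⟨by simp, ?_, ?_, ?_⟩
  · intro x hx
    rcases (by simpa using hx : x = a ∨ x = b) with rfl | rfl
    · exact edge_mem1 hor h
    · exact edge_mem2 hor h
  · simp [edge_ne hor h]
  · simp [List.Chain', List.isChain_cons_cons, h]

lemma path_suffix {l l' : List ℕ} (h : D.IsPath l) (hs : l' <:+ l) (hne : l' ≠ []) :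
    D.IsPath l' := by
  obtain ⟨s, rfl⟩ := hs
  refine ⟨hne, fun x hx => h.2.1 x (by simp [hx]), (List.nodup_append'.mp h.2.2.1).2.1,
    (List.isChain_append.mp h.2.2.2).2.1⟩

lemma path_tail {a : ℕ} {l : List ℕ} (h : D.IsPath (a :: l)) (hl : l ≠ []) : D.IsPath l :=
  path_suffix h ⟨[a], rfl⟩ hl

lemma semipath_tail {a : ℕ} {l : List ℕ} (h : D.IsSemipath (a :: l)) (hl : l ≠ []) :
    D.IsSemipath l := by
  refine ⟨hl, fun x hx => h.2.1 x (by simp [hx]), (List.nodup_cons.mp h.2.2.1).2, ?_⟩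
  have := h.2.2.2
  cases l with
  | nil => simp [List.Chain']
  | cons b t => exact (List.isChain_cons_cons.mp this).2

/-- no directed cycles -/
lemma no_cycle (hor : D.IsOriented) (hasem : D.Asemicyclic) {l : List ℕ} {x y : ℕ}
    (hl : D.IsPath l) (hh : l.head? = some y) (hlast : l.getLast? = some x)
    (hxy : (x,y) ∈ D.edges) : False := by
  match l with
  | [] => simp at hh
  | [z] =>
    simp at hh hlast
    subst hh; subst hlast
    exact edge_ne hor hxy rfl
  | [z, w] =>
    have hy : y = z := by simp at hh; exact hh.symm
    have hx : x = w := by simp at hlast; exact hlast.symm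
    subst hy; subst hx
    have h1 : (y, x) ∈ D.edges := (List.isChain_cons_cons.mp hl.2.2.2).1
    exact edge_antisymm hor h1 hxy
  | z :: w :: v :: t =>
    have hy : y = z := by simp at hh; exact hh.symm
    subst hy
    refine hasem ((y :: w :: v :: t) ++ [y]) ⟨?_, ?_, ?_, ?_, ?_⟩
    · simp
    · intro q hq
      rcases List.mem_append.mp hq with h | h
      · exact hl.2.1 q h
      · simp at h; subst h; exact hl.2.1 _ (by simp)
    · show ((y :: w :: v :: t) ++ [y]).head? = ((y :: w :: v :: t) ++ [y]).getLast?
      rw [List.getLast?_concat]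
      rfl
    · rw [List.dropLast_concat]; exact hl.2.2.1
    · refine List.isChain_append.mpr ⟨hl.2.2.2.imp (fun a b h => Or.inl h), by simp, ?_⟩
      intro p hp q hq
      simp at hq
      rw [hlast] at hp
      simp at hp
      subst hp; subst hq
      exact Or.inl hxy

lemma path_snoc (hor : D.IsOriented) (hasem : D.Asemicyclic) {P : List ℕ} {a b : ℕ}
    (hP : D.IsPath P) (hlast : P.getLast? = some a) (hab : (a,b) ∈ D.edges) :
    D.IsPath (P ++ [b]) := by
  have hbP : b ∉ P := by
    intro hbP
    obtain ⟨s, t, rfl⟩ := List.append_of_mem hbP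
    have hsuf : D.IsPath (b :: t) := path_suffix hP ⟨s, rfl⟩ (by simp)
    have hlast' : (b :: t).getLast? = some a := by
      rw [← hlast]; exact (List.getLast?_append_of_ne_nil s (by simp)).symm
    exact no_cycle hor hasem hsuf rfl hlast' hab
  refine ⟨by simp, ?_, ?_, ?_⟩
  · intro x hx
    rcases List.mem_append.mp hx with h | h
    · exact hP.2.1 x h
    · simp at h; subst h; exact edge_mem2 hor hab
  · exact List.nodup_append'.mpr ⟨hP.2.2.1, by simp, by
      intro x hx hx'; simp at hx'; subst hx'; exact hbP hx⟩
  · refine List.isChain_append.mpr ⟨hP.2.2.2, by simp, ?_⟩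
    intro p hp q hq
    simp at hq
    rw [hlast] at hp; simp at hp
    subst hp; subst hq
    exact hab

lemma path_append (hor : D.IsOriented) (hasem : D.Asemicyclic) :
    ∀ (Q' P : List ℕ) (a b : ℕ),
    D.IsPath P → P.getLast? = some a → (a,b) ∈ D.edges → D.IsPath (b :: Q') →
    D.IsPath (P ++ b :: Q') := by
  intro Q'
  induction Q' with
  | nil =>
    intro P a b hP hlast hab _
    exact path_snoc hor hasem hP hlast hab
  | cons q Q'' ih =>
    intro P a b hP hlast hab hb
    have hPb : D.IsPath (P ++ [b]) := path_snoc hor hasem hP hlast hab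
    have hbq : (b, q) ∈ D.edges := (List.isChain_cons_cons.mp hb.2.2.2).1
    have hq : D.IsPath (q :: Q'') := path_tail hb (by simp)
    have heq : P ++ b :: q :: Q'' = (P ++ [b]) ++ q :: Q'' := by
      rw [List.append_cons P b (q :: Q'')]
    rw [heq]
    exact ih (P ++ [b]) b q hPb ((List.getLast?_concat (l := P))) hbq hq

lemma path_append' (hor : D.IsOriented) (hasem : D.Asemicyclic) {P Q : List ℕ} {a b : ℕ}
    (hP : D.IsPath P) (hQ : D.IsPath Q) (ha : P.getLast? = some a) (hb : Q.head? = some b)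
    (hab : (a,b) ∈ D.edges) : D.IsPath (P ++ Q) := by
  obtain ⟨Q', rfl⟩ : ∃ Q', Q = b :: Q' := by
    cases Q with
    | nil => simp at hb
    | cons x Q' => simp at hb; exact ⟨Q', by rw [hb]⟩
  exact path_append hor hasem Q' P a b hP ha hab hQ

/-- `Hot a`: there is a directed path to `a` from a vertex with two out-edges -/
def Hot (D : DG) (a : ℕ) : Prop :=
  ∃ V v u1 u2, D.IsPath V ∧ V.head? = some v ∧ V.getLast? = some a ∧
    (v,u1) ∈ D.edges ∧ (v,u2) ∈ D.edges ∧ u1 ≠ u2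

/-- `Cold b`: there is a directed path from `b` to a vertex with two in-edges -/
def Cold (D : DG) (b : ℕ) : Prop :=
  ∃ Q w y z, D.IsPath Q ∧ Q.head? = some b ∧ Q.getLast? = some w ∧
    (y,w) ∈ D.edges ∧ (z,w) ∈ D.edges ∧ y ≠ z

lemma hot_base {a u1 u2 : ℕ} (hor : D.IsOriented) (h1 : (a,u1) ∈ D.edges)
    (h2 : (a,u2) ∈ D.edges) (h12 : u1 ≠ u2) : Hot D a :=
  ⟨[a], a, u1, u2, path_single (edge_mem1 hor h1), rfl, rfl, h1, h2, h12⟩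

lemma cold_base {b y z : ℕ} (hor : D.IsOriented) (h1 : (y,b) ∈ D.edges)
    (h2 : (z,b) ∈ D.edges) (h12 : y ≠ z) : Cold D b :=
  ⟨[b], b, y, z, path_single (edge_mem2 hor h1), rfl, rfl, h1, h2, h12⟩

lemma hot_step (hor : D.IsOriented) (hasem : D.Asemicyclic) {a b : ℕ}
    (h : Hot D a) (hab : (a,b) ∈ D.edges) : Hot D b := by
  obtain ⟨V, v, u1, u2, hV, hh, hl, h1, h2, h12⟩ := h
  refine ⟨V ++ [b], v, u1, u2, path_snoc hor hasem hV hl hab, ?_, (List.getLast?_concat (l := V)), h1, h2, h12⟩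
  rw [List.head?_append_of_ne_nil V (by rintro rfl; simp at hh)]
  exact hh

lemma cold_step (hor : D.IsOriented) (hasem : D.Asemicyclic) {a b : ℕ}
    (hab : (a,b) ∈ D.edges) (h : Cold D b) : Cold D a := by
  obtain ⟨Q, w, y, z, hQ, hh, hl, h1, h2, h12⟩ := h
  refine ⟨a :: Q, w, y, z, ?_, rfl, ?_, h1, h2, h12⟩
  · have := path_append' hor hasem (path_single (edge_mem1 hor hab)) hQ rfl hh hab
    simpa using this
  · rw [← hl]
    cases Q with
    | nil => simp at hh
    | cons x Q' => exact List.getLast?_cons_cons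

lemma inner_of_two_in (hor : D.IsOriented) (hwef : D.WEFunctional) {w y z : ℕ}
    (h1 : (y,w) ∈ D.edges) (h2 : (z,w) ∈ D.edges) (h12 : y ≠ z) : D.isInner w := by
  refine ⟨edge_mem2 hor h1, ⟨y, h1⟩, ?_⟩
  by_contra h
  push_neg at h
  have hev : D.isEVert w := ⟨edge_mem2 hor h1, h⟩
  have := (hwef.2 (y, w) ⟨h1, hev⟩).2 z h2
  exact h12 this.symm

lemma inner_of_two_out (hor : D.IsOriented) (hwef : D.WEFunctional) {a u1 u2 : ℕ}
    (h1 : (a,u1) ∈ D.edges) (h2 : (a,u2) ∈ D.edges) (h12 : u1 ≠ u2) : D.isInner a := by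
  refine ⟨edge_mem1 hor h1, ?_, ⟨u1, h1⟩⟩
  by_contra h
  push_neg at h
  have hwv : D.isWVert a := ⟨edge_mem1 hor h1, h⟩
  have := (hwef.1 (a, u1) ⟨h1, hwv⟩).2 u2 h2
  exact h12 this.symm

lemma two_in_card {w y z : ℕ} (h1 : (y,w) ∈ D.edges) (h2 : (z,w) ∈ D.edges) (h12 : y ≠ z) :
    2 ≤ (D.edges.filter (fun e => e.2 = w)).card := by
  refine Finset.one_lt_card.mpr ⟨(y,w), ?_, (z,w), ?_, ?_⟩ <;>
    simp [Finset.mem_filter, h1, h2, h12]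

lemma two_out_card {a u1 u2 : ℕ} (h1 : (a,u1) ∈ D.edges) (h2 : (a,u2) ∈ D.edges) (h12 : u1 ≠ u2) :
    2 ≤ (D.edges.filter (fun e => e.1 = a)).card := by
  refine Finset.one_lt_card.mpr ⟨(a,u1), ?_, (a,u2), ?_, ?_⟩ <;>
    simp [Finset.mem_filter, h1, h2, h12]

lemma card_two_in (h : 2 ≤ (D.edges.filter (fun e => e.2 = w)).card) :
    ∃ y z, (y,w) ∈ D.edges ∧ (z,w) ∈ D.edges ∧ y ≠ z := by
  obtain ⟨e, he, f, hf, hef⟩ := Finset.one_lt_card.mp h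
  simp [Finset.mem_filter] at he hf
  refine ⟨e.1, f.1, ?_, ?_, ?_⟩
  · rw [← he.2]; exact he.1
  · rw [← hf.2]; exact hf.1
  · intro h'; exact hef (Prod.ext h' (he.2.trans hf.2.symm))

lemma card_two_out (h : 2 ≤ (D.edges.filter (fun e => e.1 = a)).card) :
    ∃ u1 u2, (a,u1) ∈ D.edges ∧ (a,u2) ∈ D.edges ∧ u1 ≠ u2 := by
  obtain ⟨e, he, f, hf, hef⟩ := Finset.one_lt_card.mp h
  simp [Finset.mem_filter] at he hf
  refine ⟨e.2, f.2, ?_, ?_, ?_⟩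
  · rw [← he.2]; exact he.1
  · rw [← hf.2]; exact hf.1
  · intro h'; exact hef (Prod.ext (he.2.trans hf.2.symm) h')
lemma rev_decomp {l : List ℕ} {a b : ℕ} {t : List ℕ} (h : l = a::b::t) :
    ∃ d c t', l.reverse = d :: c :: t' := by
  subst h
  rcases hr : (a::b::t).reverse with _ | ⟨d, _ | ⟨c, t'⟩⟩
  · have := congrArg List.length hr; simp at this
  · have := congrArg List.length hr; simp at this
  · exact ⟨d, c, t', rfl⟩

lemma last_edge_of_path {l : List ℕ} {d c : ℕ} {t' : List ℕ} (hl : D.IsPath l)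
    (h : l.reverse = d :: c :: t') : (c, d) ∈ D.edges := by
  have hch : List.Chain' (flip (fun a b => (a,b) ∈ D.edges)) l.reverse :=
    List.isChain_reverse.mpr hl.2.2.2
  rw [h] at hch
  exact (List.isChain_cons_cons.mp hch).1

lemma last_of_rev {l : List ℕ} {d c : ℕ} {t' : List ℕ} (h : l.reverse = d :: c :: t') :
    l.getLast? = some d := by
  rw [← List.head?_reverse, h]; rfl

lemma first_edge_of_path {l : List ℕ} {a b : ℕ} {t : List ℕ} (hl : D.IsPath l)
    (h : l = a :: b :: t) : (a, b) ∈ D.edges := by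
  subst h; exact (List.isChain_cons_cons.mp hl.2.2.2).1

lemma dec2 {L : Lab} (hdec : ∀ l, D.IsPath l → Ydecent L YDir.N l ∧ Ydecent L YDir.S l)
    {l : List ℕ} {a b d c : ℕ} {t t' : List ℕ} (hl : D.IsPath l) (h1 : l = a::b::t)
    (h2 : l.reverse = d::c::t') (Y : YDir) :
    L a Y XDir.E = (a,b) ∨ L d Y XDir.W = (c,d) := by
  have hY : Ydecent L Y l := by
    cases Y
    · exact (hdec l hl).1
    · exact (hdec l hl).2
  rcases hY a b t h1 with h | ⟨c', d', t₃, hrev, hw⟩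
  · exact Or.inl h
  · rw [h2] at hrev
    injection hrev with e1 e2
    injection e2 with e2 _
    subst e1; subst e2
    exact Or.inr hw

lemma not_path_head {l : List ℕ} {x y : ℕ} {t : List ℕ} (h : l = x::y::t)
    (hxy : (x,y) ∉ D.edges) : ¬ D.IsPath l := fun hp =>
  hxy (first_edge_of_path hp h)

lemma cold_of_proper (hor : D.IsOriented) (hasem : D.Asemicyclic) :
    ∀ (t : List ℕ) (a b : ℕ), (a,b) ∈ D.edges →
    D.IsSemipath (a :: b :: t) → ¬ D.IsPath (a :: b :: t) → Cold D b := by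
  intro t
  induction t with
  | nil => intro a b hab hsp hnp; exact absurd (path_pair hor hab) hnp
  | cons c t' ih =>
    intro a b hab hsp hnp
    have hbc : D.semiAdj b c := (List.isChain_cons_cons.mp (List.isChain_cons_cons.mp hsp.2.2.2).2).1
    rcases hbc with hbc | hcb
    · by_cases hp : D.IsPath (b :: c :: t')
      · exact absurd ⟨by simp, hsp.2.1, hsp.2.2.1,
          List.isChain_cons_cons.mpr ⟨hab, hp.2.2.2⟩⟩ hnp
      · exact cold_step hor hasem hbc (ih b c hbc (semipath_tail hsp (by simp)) hp)
    · have hac : a ≠ c := by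
        have hnd := hsp.2.2.1
        intro h; subst h
        simp at hnd
      exact cold_base hor hab hcb hac

lemma hot_of_proper (hor : D.IsOriented) (hasem : D.Asemicyclic) :
    ∀ (s : List ℕ) (b a : ℕ), (a,b) ∈ D.edges →
    D.IsSemipath (b :: a :: s) → ¬ D.IsPath (b :: a :: s).reverse → Hot D a := by
  intro s
  induction s with
  | nil =>
    intro b a hab hsp hnp
    exfalso; apply hnp
    have : (b :: a :: ([] : List ℕ)).reverse = [a, b] := by simp
    rw [this]
    exact path_pair hor hab
  | cons c s' ih =>
    intro b a hab hsp hnp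
    have hac : D.semiAdj a c := (List.isChain_cons_cons.mp (List.isChain_cons_cons.mp hsp.2.2.2).2).1
    rcases hac with hac | hca
    · have hbc : b ≠ c := by
        have hnd := hsp.2.2.1
        intro h; subst h
        simp at hnd
      exact hot_base hor hab hac hbc
    · by_cases hp : D.IsPath (a :: c :: s').reverse
      · exfalso; apply hnp
        have heq : (b::a::c::s').reverse = (a::c::s').reverse ++ [b] := by simp
        rw [heq]
        refine path_snoc hor hasem hp ?_ hab
        rw [List.getLast?_reverse]; rfl
      · exact hot_step hor hasem (ih a c hca (semipath_tail hsp (by simp)) hp) hca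
lemma head?_eq {l : List ℕ} {b : ℕ} (h : l.head? = some b) : ∃ t, l = b :: t := by
  cases l with
  | nil => simp at h
  | cons x t => simp at h; exact ⟨t, by rw [h]⟩

section Forward

variable {L : Lab}

lemma exists_W_ne (hsep : SeparatesNS D L) {w : ℕ} (hin : D.isInner w)
    (hcard : 2 ≤ (D.edges.filter (fun e => e.2 = w)).card) (h : ℕ × ℕ) :
    ∃ Y, L w Y XDir.W ≠ h := by
  by_cases he : L w YDir.N XDir.W = h
  · exact ⟨YDir.S, fun hs => (hsep w hin).1 hcard (he.trans hs.symm)⟩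
  · exact ⟨YDir.N, he⟩

lemma exists_E_ne (hsep : SeparatesNS D L) {v : ℕ} (hin : D.isInner v)
    (hcard : 2 ≤ (D.edges.filter (fun e => e.1 = v)).card) (h : ℕ × ℕ) :
    ∃ Y, L v Y XDir.E ≠ h := by
  by_cases he : L v YDir.N XDir.E = h
  · exact ⟨YDir.S, fun hs => (hsep v hin).2 hcard (he.trans hs.symm)⟩
  · exact ⟨YDir.N, he⟩

lemma other_W_ne (hsep : SeparatesNS D L) {w : ℕ} (hin : D.isInner w)
    (hcard : 2 ≤ (D.edges.filter (fun e => e.2 = w)).card) {h : ℕ × ℕ} {Y : YDir}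
    (hY : L w Y XDir.W = h) : L w (yo Y) XDir.W ≠ h := by
  intro h2
  cases Y
  · exact (hsep w hin).1 hcard (hY.trans h2.symm)
  · exact (hsep w hin).1 hcard (h2.trans hY.symm)

lemma other_E_ne (hsep : SeparatesNS D L) {v : ℕ} (hin : D.isInner v)
    (hcard : 2 ≤ (D.edges.filter (fun e => e.1 = v)).card) {h : ℕ × ℕ} {Y : YDir}
    (hY : L v Y XDir.E = h) : L v (yo Y) XDir.E ≠ h := by
  intro h2
  cases Y
  · exact (hsep v hin).2 hcard (hY.trans h2.symm)
  · exact (hsep v hin).2 hcard (h2.trans hY.symm)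

variable (hor : D.IsOriented) (hasem : D.Asemicyclic) (hwef : D.WEFunctional)
  (hsep : SeparatesNS D L)
  (hdec : ∀ l, D.IsPath l → Ydecent L YDir.N l ∧ Ydecent L YDir.S l)

include hor hasem hwef hsep hdec

lemma force_out {m b : ℕ} (hmb : (m,b) ∈ D.edges) (hc : Cold D b) :
    ∃ Y, L m Y XDir.E = (m, b) := by
  obtain ⟨Q, w, y, z, hQ, hh, hl, hy, hz, hyz⟩ := hc
  obtain ⟨Q₀, rfl⟩ := head?_eq hh
  have hM : D.IsPath (m :: b :: Q₀) := by
    have := path_append' hor hasem (path_single (edge_mem1 hor hmb)) hQ rfl hh hmb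
    simpa using this
  obtain ⟨d, c, t', hrev⟩ := rev_decomp (l := m :: b :: Q₀) rfl
  have hd : d = w := by
    have h1 := last_of_rev hrev
    rw [List.getLast?_cons_cons] at h1
    rw [hl] at h1
    exact (Option.some_inj.mp h1).symm
  subst hd
  have hcd : (c, d) ∈ D.edges := last_edge_of_path hM hrev
  have hin : D.isInner d := inner_of_two_in hor hwef hy hz hyz
  obtain ⟨Y₀, hY₀⟩ := exists_W_ne hsep hin (two_in_card hy hz hyz) (c, d)
  rcases dec2 hdec hM rfl hrev Y₀ with h | h
  · exact ⟨Y₀, h⟩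
  · exact absurd h hY₀

lemma force_in {a m : ℕ} (ham : (a,m) ∈ D.edges) (hh : Hot D a) :
    ∃ Y, L m Y XDir.W = (a, m) := by
  obtain ⟨V, v, u1, u2, hV, hVh, hVl, hu1, hu2, hu⟩ := hh
  obtain ⟨V₀, rfl⟩ := head?_eq hVh
  have hM : D.IsPath ((v :: V₀) ++ [m]) := path_snoc hor hasem hV hVl ham
  obtain ⟨x, t, hxt⟩ : ∃ x t, V₀ ++ [m] = x :: t := by
    cases V₀ with
    | nil => exact ⟨m, [], rfl⟩
    | cons x V₁ => exact ⟨x, V₁ ++ [m], rfl⟩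
  have h1 : (v :: V₀) ++ [m] = v :: x :: t := by simp [hxt]
  obtain ⟨s, hs⟩ : ∃ s, (v :: V₀).reverse = a :: s := by
    apply head?_eq
    rw [List.head?_reverse]
    exact hVl
  have h2 : ((v :: V₀) ++ [m]).reverse = m :: a :: s := by
    rw [List.reverse_append, hs]; rfl
  have hin : D.isInner v := inner_of_two_out hor hwef hu1 hu2 hu
  obtain ⟨Y₀, hY₀⟩ := exists_E_ne hsep hin (two_out_card hu1 hu2 hu) (v, x)
  rcases dec2 hdec hM h1 h2 Y₀ with h | h
  · exact absurd h hY₀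
  · exact ⟨Y₀, h⟩

lemma helper21 {m b1 b2 cc : ℕ} (h1 : (m,b1) ∈ D.edges) (h2 : (m,b2) ∈ D.edges)
    (hb : b1 ≠ b2) (hf : (cc,m) ∈ D.edges) (hcold1 : Cold D b1) (hcold2 : Cold D b2)
    (hhot : Hot D cc) : False := by
  obtain ⟨V, v, u1, u2, hV, hVh, hVl, hu1, hu2, hu⟩ := hhot
  obtain ⟨V₀, rfl⟩ := head?_eq hVh
  obtain ⟨x, hx⟩ : ∃ x, ∀ (R : List ℕ), (V₀ ++ m :: R).head? = some x := by
    cases V₀ with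
    | nil => exact ⟨m, fun R => rfl⟩
    | cons x V₁ => exact ⟨x, fun R => rfl⟩
  have hinv : D.isInner v := inner_of_two_out hor hwef hu1 hu2 hu
  obtain ⟨Y, hY⟩ := exists_E_ne hsep hinv (two_out_card hu1 hu2 hu) (v, x)
  have main : ∀ b, (m,b) ∈ D.edges → Cold D b → L m (yo Y) XDir.E = (m, b) := by
    intro b hmb hc
    obtain ⟨Q, w, y, z, hQ, hh, hl, hy, hz, hyz⟩ := hc
    obtain ⟨Q₀, rfl⟩ := head?_eq hh
    have hMQ : D.IsPath (m :: b :: Q₀) := by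
      have := path_append' hor hasem (path_single (edge_mem1 hor hmb)) hQ rfl hh hmb
      simpa using this
    have hR : D.IsPath ((v :: V₀) ++ m :: b :: Q₀) :=
      path_append' hor hasem hV hMQ hVl rfl hf
    obtain ⟨t, ht⟩ := head?_eq (hx (b :: Q₀))
    have h1R : (v :: V₀) ++ m :: b :: Q₀ = v :: x :: t := by simp [ht]
    obtain ⟨d, c, t', hrev⟩ := rev_decomp (l := m :: b :: Q₀) rfl
    have hd : d = w := by
      have h1 := last_of_rev hrev
      rw [List.getLast?_cons_cons, hl] at h1
      exact (Option.some_inj.mp h1).symm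
    subst hd
    have hcd : (c, d) ∈ D.edges := last_edge_of_path hMQ hrev
    have h2R : ((v :: V₀) ++ m :: b :: Q₀).reverse = d :: c :: (t' ++ (v :: V₀).reverse) := by
      rw [List.reverse_append, hrev]; rfl
    have hW : L d Y XDir.W = (c, d) := by
      rcases dec2 hdec hR h1R h2R Y with h | h
      · exact absurd h hY
      · exact h
    have hin : D.isInner d := inner_of_two_in hor hwef hy hz hyz
    have hWo : L d (yo Y) XDir.W ≠ (c, d) :=
      other_W_ne hsep hin (two_in_card hy hz hyz) hW
    rcases dec2 hdec hMQ rfl hrev (yo Y) with h | h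
    · exact h
    · exact absurd h hWo
  have e1 := main b1 h1 hcold1
  have e2 := main b2 h2 hcold2
  exact hb (Prod.ext_iff.mp (e1.symm.trans e2)).2

lemma helper12 {m c1 c2 b : ℕ} (h1 : (c1,m) ∈ D.edges) (h2 : (c2,m) ∈ D.edges)
    (hc : c1 ≠ c2) (he : (m,b) ∈ D.edges) (hhot1 : Hot D c1) (hhot2 : Hot D c2)
    (hcold : Cold D b) : False := by
  obtain ⟨Q, w, y, z, hQ, hh, hl, hy, hz, hyz⟩ := hcold
  obtain ⟨Q₀, rfl⟩ := head?_eq hh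
  have hMQ : D.IsPath (m :: b :: Q₀) := by
    have := path_append' hor hasem (path_single (edge_mem2 hor h1)) hQ rfl hh he
    simpa using this
  obtain ⟨d, c, t', hrev⟩ := rev_decomp (l := m :: b :: Q₀) rfl
  have hd : d = w := by
    have h1' := last_of_rev hrev
    rw [List.getLast?_cons_cons, hl] at h1'
    exact (Option.some_inj.mp h1').symm
  subst hd
  have hcd : (c, d) ∈ D.edges := last_edge_of_path hMQ hrev
  have hin : D.isInner d := inner_of_two_in hor hwef hy hz hyz
  obtain ⟨Y, hY⟩ := exists_W_ne hsep hin (two_in_card hy hz hyz) (c, d)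
  have main : ∀ cx, (cx,m) ∈ D.edges → Hot D cx → L m (yo Y) XDir.W = (cx, m) := by
    intro cx hcm hhot
    obtain ⟨V, v, u1, u2, hV, hVh, hVl, hu1, hu2, hu⟩ := hhot
    obtain ⟨V₀, rfl⟩ := head?_eq hVh
    obtain ⟨x, hx⟩ : ∃ x, ∀ (R : List ℕ), (V₀ ++ m :: R).head? = some x := by
      cases V₀ with
      | nil => exact ⟨m, fun R => rfl⟩
      | cons x V₁ => exact ⟨x, fun R => rfl⟩
    have hR : D.IsPath ((v :: V₀) ++ m :: b :: Q₀) :=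
      path_append' hor hasem hV hMQ hVl rfl hcm
    obtain ⟨t, ht⟩ := head?_eq (hx (b :: Q₀))
    have h1R : (v :: V₀) ++ m :: b :: Q₀ = v :: x :: t := by simp [ht]
    have h2R : ((v :: V₀) ++ m :: b :: Q₀).reverse = d :: c :: (t' ++ (v :: V₀).reverse) := by
      rw [List.reverse_append, hrev]; rfl
    have hE : L v Y XDir.E = (v, x) := by
      rcases dec2 hdec hR h1R h2R Y with h | h
      · exact h
      · exact absurd h hY
    have hinv : D.isInner v := inner_of_two_out hor hwef hu1 hu2 hu
    have hEo : L v (yo Y) XDir.E ≠ (v, x) :=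
      other_E_ne hsep hinv (two_out_card hu1 hu2 hu) hE
    have hM2 : D.IsPath ((v :: V₀) ++ [m]) := path_snoc hor hasem hV hVl hcm
    obtain ⟨t2, ht2⟩ := head?_eq (show ((V₀ ++ [m]) : List ℕ).head? = some x by
      have := hx []
      simpa using this)
    have h1M : (v :: V₀) ++ [m] = v :: x :: t2 := by simp [ht2]
    obtain ⟨s, hs⟩ : ∃ s, (v :: V₀).reverse = cx :: s := by
      apply head?_eq
      rw [List.head?_reverse]
      exact hVl
    have h2M : ((v :: V₀) ++ [m]).reverse = m :: cx :: s := by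
      rw [List.reverse_append, hs]; rfl
    rcases dec2 hdec hM2 h1M h2M (yo Y) with h | h
    · exact absurd h hEo
    · exact h
  have e1 := main c1 h1 hhot1
  have e2 := main c2 h2 hhot2
  exact hc (Prod.ext_iff.mp (e1.symm.trans e2)).1

lemma out3 {m b1 b2 b3 : ℕ} (h1 : (m,b1) ∈ D.edges) (h2 : (m,b2) ∈ D.edges)
    (h3 : (m,b3) ∈ D.edges) (h12 : b1 ≠ b2) (h13 : b1 ≠ b3) (h23 : b2 ≠ b3)
    (hc1 : Cold D b1) (hc2 : Cold D b2) (hc3 : Cold D b3) : False := by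
  obtain ⟨Y1, hY1⟩ := force_out hor hasem hwef hsep hdec h1 hc1
  obtain ⟨Y2, hY2⟩ := force_out hor hasem hwef hsep hdec h2 hc2
  obtain ⟨Y3, hY3⟩ := force_out hor hasem hwef hsep hdec h3 hc3
  have e12 : Y1 = Y2 → False := by
    intro h; rw [h] at hY1
    exact h12 (Prod.ext_iff.mp (hY1.symm.trans hY2)).2
  have e13 : Y1 = Y3 → False := by
    intro h; rw [h] at hY1
    exact h13 (Prod.ext_iff.mp (hY1.symm.trans hY3)).2
  have e23 : Y2 = Y3 → False := by
    intro h; rw [h] at hY2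
    exact h23 (Prod.ext_iff.mp (hY2.symm.trans hY3)).2
  cases Y1 <;> cases Y2 <;> cases Y3 <;>
    first | exact e12 rfl | exact e13 rfl | exact e23 rfl

lemma in3 {m a1 a2 a3 : ℕ} (h1 : (a1,m) ∈ D.edges) (h2 : (a2,m) ∈ D.edges)
    (h3 : (a3,m) ∈ D.edges) (h12 : a1 ≠ a2) (h13 : a1 ≠ a3) (h23 : a2 ≠ a3)
    (hh1 : Hot D a1) (hh2 : Hot D a2) (hh3 : Hot D a3) : False := by
  obtain ⟨Y1, hY1⟩ := force_in hor hasem hwef hsep hdec h1 hh1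
  obtain ⟨Y2, hY2⟩ := force_in hor hasem hwef hsep hdec h2 hh2
  obtain ⟨Y3, hY3⟩ := force_in hor hasem hwef hsep hdec h3 hh3
  have e12 : Y1 = Y2 → False := by
    intro h; rw [h] at hY1
    exact h12 (Prod.ext_iff.mp (hY1.symm.trans hY2)).1
  have e13 : Y1 = Y3 → False := by
    intro h; rw [h] at hY1
    exact h13 (Prod.ext_iff.mp (hY1.symm.trans hY3)).1
  have e23 : Y2 = Y3 → False := by
    intro h; rw [h] at hY2
    exact h23 (Prod.ext_iff.mp (hY2.symm.trans hY3)).1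
  cases Y1 <;> cases Y2 <;> cases Y3 <;>
    first | exact e12 rfl | exact e13 rfl | exact e23 rfl

end Forward
lemma no_trans_bif {L : Lab} (hor : D.IsOriented) (hasem : D.Asemicyclic)
    (hwef : D.WEFunctional) (hsep : SeparatesNS D L)
    (hdec : ∀ l, D.IsPath l → Ydecent L YDir.N l ∧ Ydecent L YDir.S l) :
    ∀ e1 e2 e3, Bifurcation D e1 e2 e3 →
      ¬ (Transversal D e1 ∧ Transversal D e2 ∧ Transversal D e3) := by
  have hotcold : ∀ e, Transversal D e → Hot D e.1 ∧ Cold D e.2 := by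
    rintro ⟨a, b⟩ ⟨he, ⟨t, hp1⟩, ⟨s, hp2⟩⟩
    exact ⟨hot_of_proper hor hasem s b a he hp2.1 hp2.2.2,
      cold_of_proper hor hasem t a b he hp1.1 hp1.2.1⟩
  rintro ⟨a1,b1⟩ ⟨a2,b2⟩ ⟨a3,b3⟩ ⟨m1, m2, m3, n12, n13, n23, v, hv1, hv2, hv3⟩ ⟨t1, t2, t3⟩
  obtain ⟨hh1, hc1⟩ := hotcold _ t1
  obtain ⟨hh2, hc2⟩ := hotcold _ t2
  obtain ⟨hh3, hc3⟩ := hotcold _ t3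
  simp only at hh1 hh2 hh3 hc1 hc2 hc3 hv1 hv2 hv3
  rcases hv1 with h1v | h1v <;> rcases hv2 with h2v | h2v <;> rcases hv3 with h3v | h3v <;>
    [skip; skip; skip; skip; skip; skip; skip; skip] <;>
    rw [← h1v] at m1 <;> rw [← h2v] at m2 <;> rw [← h3v] at m3
  · exact out3 hor hasem hwef hsep hdec m1 m2 m3
      (fun h => n12 (by rw [← h1v, ← h2v, h])) (fun h => n13 (by rw [← h1v, ← h3v, h]))
      (fun h => n23 (by rw [← h2v, ← h3v, h])) hc1 hc2 hc3
  · exact helper21 hor hasem hwef hsep hdec m1 m2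
      (fun h => n12 (by rw [← h1v, ← h2v, h])) m3 hc1 hc2 hh3
  · exact helper21 hor hasem hwef hsep hdec m1 m3
      (fun h => n13 (by rw [← h1v, ← h3v, h])) m2 hc1 hc3 hh2
  · exact helper12 hor hasem hwef hsep hdec m2 m3
      (fun h => n23 (by rw [← h2v, ← h3v, h])) m1 hh2 hh3 hc1
  · exact helper21 hor hasem hwef hsep hdec m2 m3
      (fun h => n23 (by rw [← h2v, ← h3v, h])) m1 hc2 hc3 hh1
  · exact helper12 hor hasem hwef hsep hdec m1 m3
      (fun h => n13 (by rw [← h1v, ← h3v, h])) m2 hh1 hh3 hc2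
  · exact helper12 hor hasem hwef hsep hdec m1 m2
      (fun h => n12 (by rw [← h1v, ← h2v, h])) m3 hh1 hh2 hc3
  · exact in3 hor hasem hwef hsep hdec m1 m2 m3
      (fun h => n12 (by rw [← h1v, ← h2v, h])) (fun h => n13 (by rw [← h1v, ← h3v, h]))
      (fun h => n23 (by rw [← h2v, ← h3v, h])) hh1 hh2 hh3
lemma path_prefix {l l' : List ℕ} (h : D.IsPath l) (hs : l' <+: l) (hne : l' ≠ []) :
    D.IsPath l' := by
  obtain ⟨s, rfl⟩ := hs
  refine ⟨hne, fun x hx => h.2.1 x (by simp [hx]), (List.nodup_append'.mp h.2.2.1).1,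
    (List.isChain_append.mp h.2.2.2).1⟩

lemma close_cycle (hor : D.IsOriented) (hasem : D.Asemicyclic) {P : List ℕ} {v u : ℕ}
    (hP : D.IsPath P) (hh : P.head? = some v) (hl : P.getLast? = some u)
    (hadj : D.semiAdj u v) (hlen : 3 ≤ P.length) : False := by
  apply hasem (P ++ [v])
  obtain ⟨P₀, rfl⟩ := head?_eq hh
  refine ⟨by simp at hlen ⊢; omega, ?_, ?_, ?_, ?_⟩
  · intro q' hq'
    rcases List.mem_append.mp hq' with h | h
    · exact hP.2.1 q' h
    · simp at h; subst h; exact hP.2.1 _ (List.mem_cons_self)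
  · show _ = ((v :: P₀) ++ [v]).getLast?
    rw [List.getLast?_concat]; rfl
  · rw [List.dropLast_concat]; exact hP.2.2.1
  · refine List.isChain_append.mpr ⟨hP.2.2.2.imp (fun a b h => Or.inl h), by simp, ?_⟩
    intro p hp q hq
    simp at hq
    rw [hl] at hp; simp at hp
    subst hp; subst hq
    exact hadj

/-- transversal in the Hot/Cold sense -/
def TransHC (D : DG) (e : ℕ × ℕ) : Prop := e ∈ D.edges ∧ Hot D e.1 ∧ Cold D e.2

lemma transHC_transversal (hor : D.IsOriented) (hasem : D.Asemicyclic) {a b : ℕ}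
    (hab : (a,b) ∈ D.edges) (hhot : Hot D a) (hcold : Cold D b) :
    Transversal D (a, b) := by
  refine ⟨hab, ?_, ?_⟩
  · -- proper semipath starting a, b : use Cold b
    obtain ⟨Q, w, y, z, hQ, hh, hl, hy, hz, hyz⟩ := hcold
    obtain ⟨Q₀, rfl⟩ := head?_eq hh
    have hM : D.IsPath (a :: b :: Q₀) := by
      have := path_append' hor hasem (path_single (edge_mem1 hor hab)) hQ rfl rfl hab
      simpa using this
    obtain ⟨d, x', r, hrev⟩ := rev_decomp (l := a :: b :: Q₀) rfl
    have hd : w = d := by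
      have h1 := last_of_rev hrev
      rw [List.getLast?_cons_cons, hl] at h1
      exact Option.some_inj.mp h1
    subst hd
    have hx'w : (x', w) ∈ D.edges := last_edge_of_path hM hrev
    -- any in-edge of w from inside M is x'
    have claim : ∀ u, (u, w) ∈ D.edges → u ∈ (a :: b :: Q₀) → u = x' := by
      intro u hu humem
      obtain ⟨A, B, hAB⟩ := List.append_of_mem humem
      match B, hAB with
      | [], hAB =>
        exfalso
        have : (a :: b :: Q₀).getLast? = some u := by
          rw [hAB]; exact (List.getLast?_concat (l := A))
        rw [last_of_rev hrev] at this
        exact edge_ne hor hu (Option.some_inj.mp this).symm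
      | [q], hAB =>
        have h2 : (a :: b :: Q₀).reverse = q :: u :: A.reverse := by
          rw [hAB]; simp
        have h3 := hrev.symm.trans h2
        injection h3 with e1 h3
        injection h3 with e2 _
        exact e2.symm
      | q1 :: q2 :: B', hAB =>
        exfalso
        have hsuf : D.IsPath (u :: q1 :: q2 :: B') := path_suffix hM ⟨A, hAB.symm⟩ (by simp)
        have hlast : (u :: q1 :: q2 :: B').getLast? = some w := by
          rw [← last_of_rev hrev, hAB]
          exact (List.getLast?_append_of_ne_nil A (by simp)).symm
        exact close_cycle hor hasem hsuf rfl hlast (Or.inr hu) (by simp)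
    have hex : ∃ u, (u, w) ∈ D.edges ∧ u ∉ (a :: b :: Q₀) := by
      by_cases hy' : y ∈ (a :: b :: Q₀)
      · by_cases hz' : z ∈ (a :: b :: Q₀)
        · exact absurd ((claim y hy hy').trans (claim z hz hz').symm) hyz
        · exact ⟨z, hz, hz'⟩
      · exact ⟨y, hy, hy'⟩
    obtain ⟨u, huw, hunotin⟩ := hex
    refine ⟨Q₀ ++ [u], ⟨⟨by simp, ?_, ?_, ?_⟩, ?_, ?_⟩⟩
    · -- verts
      intro q hq
      have : q ∈ (a :: b :: Q₀) ++ [u] := by simpa using hq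
      rcases List.mem_append.mp this with h | h
      · exact hM.2.1 q h
      · simp at h; subst h; exact edge_mem1 hor huw
    · -- nodup
      have : ((a :: b :: Q₀) ++ [u]).Nodup := List.nodup_append'.mpr
        ⟨hM.2.2.1, by simp, by intro q hq hq'; simp at hq'; subst hq'; exact hunotin hq⟩
      simpa using this
    · -- chain'
      have : List.Chain' D.semiAdj ((a :: b :: Q₀) ++ [u]) := by
        refine List.isChain_append.mpr ⟨hM.2.2.2.imp (fun p q h => Or.inl h), by simp, ?_⟩
        intro p hp q hq
        simp at hq
        rw [last_of_rev hrev] at hp; simp at hp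
        subst hp; subst hq
        exact Or.inr huw
      simpa using this
    · -- not a path
      intro hp
      have hrev' : (a :: b :: (Q₀ ++ [u])).reverse = u :: w :: x' :: r := by
        rw [show (a :: b :: (Q₀ ++ [u])) = (a :: b :: Q₀) ++ [u] by simp,
          List.reverse_append, hrev]
        rfl
      exact edge_antisymm hor huw (last_edge_of_path hp hrev')
    · -- reverse not a path
      intro hp
      have hrev' : (a :: b :: (Q₀ ++ [u])).reverse = u :: w :: x' :: r := by
        rw [show (a :: b :: (Q₀ ++ [u])) = (a :: b :: Q₀) ++ [u] by simp,
          List.reverse_append, hrev]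
        rfl
      rw [hrev'] at hp
      exact edge_antisymm hor hx'w (first_edge_of_path (path_tail hp (by simp)) rfl)
  · -- proper semipath starting b, a : use Hot a
    obtain ⟨V, v, u1, u2, hV, hVh, hVl, hu1, hu2, hu⟩ := hhot
    obtain ⟨V₀, rfl⟩ := head?_eq hVh
    have hbV : D.IsPath ((v :: V₀) ++ [b]) := path_snoc hor hasem hV hVl hab
    have hbnot : b ∉ (v :: V₀) := by
      intro hmem
      exact (List.nodup_append'.mp hbV.2.2.1).2.2 hmem (by simp)
    obtain ⟨x, hx⟩ : ∃ x, (V₀ ++ [b] : List ℕ).head? = some x := by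
      cases V₀ with
      | nil => exact ⟨b, rfl⟩
      | cons p V₁ => exact ⟨p, rfl⟩
    have claim : ∀ u, (v, u) ∈ D.edges → (u ∈ (v :: V₀) ∨ u = b) → u = x := by
      intro u hvu hbad
      rcases hbad with hmem | rfl
      · rcases List.mem_cons.mp hmem with rfl | hmem
        · exact absurd rfl (edge_ne hor hvu)
        · obtain ⟨A, B, hABeq⟩ := List.append_of_mem hmem
          cases A with
          | nil =>
            have h5 : (V₀ ++ [b] : List ℕ).head? = some u := by rw [hABeq]; rfl
            exact Option.some_inj.mp (h5.symm.trans hx)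
          | cons p A' =>
            exfalso
            have hpre : D.IsPath ((v :: p :: A') ++ [u]) := by
              refine path_prefix hV ⟨B, ?_⟩ (by simp)
              rw [hABeq]; simp
            refine close_cycle hor hasem hpre rfl (List.getLast?_concat) (Or.inr hvu)
              (by simp)
      · cases V₀ with
        | nil =>
          have h5 : ([u] : List ℕ).head? = some u := rfl
          exact Option.some_inj.mp (h5.symm.trans hx)
        | cons p V₁ =>
          exfalso
          refine close_cycle hor hasem hbV rfl (List.getLast?_concat) (Or.inr hvu)
            (by simp)
    have hex : ∃ u, (v, u) ∈ D.edges ∧ u ∉ (v :: V₀) ∧ u ≠ b := by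
      by_cases h1 : u1 ∈ (v :: V₀) ∨ u1 = b
      · by_cases h2 : u2 ∈ (v :: V₀) ∨ u2 = b
        · exact absurd ((claim u1 hu1 h1).trans (claim u2 hu2 h2).symm) hu
        · push_neg at h2; exact ⟨u2, hu2, h2.1, h2.2⟩
      · push_neg at h1; exact ⟨u1, hu1, h1.1, h1.2⟩
    obtain ⟨u, hvu, hunot, hub⟩ := hex
    obtain ⟨s₀, hs₀⟩ : ∃ s₀, (v :: V₀).reverse = a :: s₀ := by
      apply head?_eq; rw [List.head?_reverse]; exact hVl
    have hform : b :: ((v :: V₀).reverse ++ [u]) = b :: a :: (s₀ ++ [u]) := by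
      rw [hs₀]; simp
    refine ⟨s₀ ++ [u], ⟨⟨by simp, ?_, ?_, ?_⟩, ?_, ?_⟩⟩
    · intro q hq
      rw [← hform] at hq
      rcases List.mem_cons.mp hq with rfl | hq
      · exact edge_mem2 hor hab
      · rcases List.mem_append.mp hq with h | h
        · exact hV.2.1 q (by rw [← List.mem_reverse]; exact h)
        · simp at h; subst h; exact edge_mem2 hor hvu
    · rw [← hform]
      refine List.nodup_cons.mpr ⟨?_, ?_⟩
      · intro hmem
        rcases List.mem_append.mp hmem with h | h
        · exact hbnot (List.mem_reverse.mp h)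
        · simp at h; exact hub h.symm
      · refine List.nodup_append'.mpr ⟨List.nodup_reverse.mpr hV.2.2.1, by simp, ?_⟩
        intro q hq hq'
        simp at hq'; subst hq'
        exact hunot (List.mem_reverse.mp hq)
    · rw [← hform]
      refine List.isChain_cons.mpr ⟨?_, ?_⟩
      · intro h hh
        rw [List.head?_append_of_ne_nil _ (by rw [hs₀]; simp), hs₀] at hh
        simp at hh; subst hh
        exact Or.inr hab
      · refine List.isChain_append.mpr ⟨?_, by simp, ?_⟩
        · rw [List.isChain_reverse]
          exact hV.2.2.2.imp (fun p q h => Or.inr h)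
        · intro p hp q hq
          simp at hq
          rw [List.getLast?_reverse] at hp
          simp at hp
          subst hq
          rcases hp with ⟨rfl⟩
          exact Or.inl hvu
    · exact not_path_head rfl (edge_antisymm hor hab)
    · intro hp
      have hr : (b :: a :: (s₀ ++ [u])).reverse = u :: v :: (V₀ ++ [b]) := by
        rw [← hform]
        simp
      rw [hr] at hp
      exact edge_antisymm hor hvu (first_edge_of_path hp rfl)
lemma close_scycle (hasem : D.Asemicyclic) {P : List ℕ} {v u : ℕ}
    (hverts : ∀ a ∈ P, a ∈ D.verts) (hnd : P.Nodup)
    (hch : P.Chain' D.semiAdj) (hh : P.head? = some v) (hl : P.getLast? = some u)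
    (hadj : D.semiAdj u v) (hlen : 3 ≤ P.length) : False := by
  apply hasem (P ++ [v])
  obtain ⟨P₀, rfl⟩ := head?_eq hh
  refine ⟨by simp at hlen ⊢; omega, ?_, ?_, ?_, ?_⟩
  · intro q' hq'
    rcases List.mem_append.mp hq' with h | h
    · exact hverts q' h
    · simp at h; subst h; exact hverts _ (List.mem_cons_self)
  · show _ = ((v :: P₀) ++ [v]).getLast?
    rw [List.getLast?_concat]; rfl
  · rw [List.dropLast_concat]; exact hnd
  · refine List.isChain_append.mpr ⟨hch, by simp, ?_⟩
    intro p hp q hq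
    simp at hq
    rw [hl] at hp; simp at hp
    subst hp; subst hq
    exact hadj

/-- semi-adjacency with respect to an edge set -/
def sadj (S : Finset (ℕ × ℕ)) (a b : ℕ) : Prop := (a,b) ∈ S ∨ (b,a) ∈ S

def SPath (D : DG) (S : Finset (ℕ × ℕ)) (l : List ℕ) : Prop :=
  l ≠ [] ∧ (∀ a ∈ l, a ∈ D.verts) ∧ l.Nodup ∧ l.Chain' (sadj S)

lemma sadj_semiAdj {S : Finset (ℕ × ℕ)} (hS : ∀ e ∈ S, e ∈ D.edges) {a b : ℕ}
    (h : sadj S a b) : D.semiAdj a b :=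
  h.elim (fun h => Or.inl (hS _ h)) (fun h => Or.inr (hS _ h))

lemma exists_leaf (hor : D.IsOriented) (hasem : D.Asemicyclic) {S : Finset (ℕ × ℕ)}
    (hS : ∀ e ∈ S, e ∈ D.edges) (hne : S.Nonempty) :
    ∃ e₀ ∈ S, ∃ p yend : ℕ, (e₀ = (p, yend) ∨ e₀ = (yend, p)) ∧
      ∀ f ∈ S, (f.1 = yend ∨ f.2 = yend) → f = e₀ := by
  classical
  obtain ⟨g, hg⟩ := hne
  obtain ⟨ga, gb⟩ := g
  have hgE : (ga, gb) ∈ D.edges := hS _ hg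
  set PP : ℕ → Prop := fun n => ∃ l, SPath D S l ∧ l.length = n with hPP
  have hbd : ∀ l, SPath D S l → l.length ≤ D.verts.card := by
    intro l hl
    calc l.length = l.toFinset.card := (List.toFinset_card_of_nodup hl.2.2.1).symm
    _ ≤ _ := Finset.card_le_card (fun x hx => hl.2.1 x (List.mem_toFinset.mp hx))
  have hP2 : PP 2 := by
    refine ⟨[ga, gb], ⟨by simp, ?_, ?_, ?_⟩, rfl⟩
    · intro x hx
      rcases (by simpa using hx : x = ga ∨ x = gb) with rfl | rfl
      · exact edge_mem1 hor hgE
      · exact edge_mem2 hor hgE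
    · simp [edge_ne hor hgE]
    · simp [List.Chain', List.isChain_cons_cons, sadj, hg]
  have h2B : 2 ≤ D.verts.card :=
    Finset.one_lt_card.mpr ⟨ga, edge_mem1 hor hgE, gb, edge_mem2 hor hgE, edge_ne hor hgE⟩
  have hPn : PP (Nat.findGreatest PP D.verts.card) := Nat.findGreatest_spec h2B hP2
  have hn2 : 2 ≤ Nat.findGreatest PP D.verts.card := Nat.le_findGreatest h2B hP2
  obtain ⟨l, hl, hlen⟩ := hPn
  have hlform : ∃ a b t, l = a :: b :: t := by
    rcases l with _ | ⟨a, _ | ⟨b, t⟩⟩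
    · simp at hlen; omega
    · simp at hlen; omega
    · exact ⟨a, b, t, rfl⟩
  obtain ⟨a0, b0, t0, hlform⟩ := hlform
  obtain ⟨yend, p, r, hrev⟩ := rev_decomp hlform
  have hlast : l.getLast? = some yend := last_of_rev hrev
  have hadjpy : sadj S p yend := by
    have hc : List.Chain' (flip (sadj S)) l.reverse := List.isChain_reverse.mpr hl.2.2.2
    rw [hrev] at hc
    exact (List.isChain_cons_cons.mp hc).1
  have hpy : p ≠ yend := by
    rcases hadjpy with h | h
    · exact edge_ne hor (hS _ h)
    · exact (edge_ne hor (hS _ h)).symm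
  have aux : ∀ z, sadj S yend z → z ≠ yend → z = p := by
    intro z hadjz hzy
    by_cases hzl : z ∈ l
    · by_cases hzp : z = p
      · exact hzp
      exfalso
      obtain ⟨A, B2, hAB⟩ := List.append_of_mem hzl
      have hB2ne : B2 ≠ [] := by
        rintro rfl
        have h5 : l.getLast? = some z := by rw [hAB]; exact (List.getLast?_concat (l := A))
        rw [hlast] at h5
        exact hzy (Option.some_inj.mp h5).symm
      have hB2 : 2 ≤ B2.length := by
        rcases B2 with _ | ⟨q, _ | ⟨q2, B3⟩⟩
        · exact absurd rfl hB2ne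
        · exfalso
          have h5 : l.reverse = q :: z :: A.reverse := by rw [hAB]; simp
          rw [hrev] at h5
          injection h5 with e1 h5
          injection h5 with e2 _
          exact hzp e2.symm
        · simp
      have hchain : List.Chain' (sadj S) (z :: B2) := by
        have := hl.2.2.2
        rw [hAB] at this
        exact (List.isChain_append.mp this).2.1
      have hlastz : (z :: B2).getLast? = some yend := by
        rw [← hlast, hAB]
        exact (List.getLast?_append_of_ne_nil A (by simp)).symm
      refine close_scycle hasem ?_ ?_ (hchain.imp (fun a b h => sadj_semiAdj hS h))
        rfl hlastz (sadj_semiAdj hS hadjz) (by simp; omega)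
      · intro q hq
        exact hl.2.1 q (by rw [hAB]; exact List.mem_append.mpr (Or.inr hq))
      · have := hl.2.2.1
        rw [hAB] at this
        exact (List.nodup_append'.mp this).2.1
    · -- extend the maximal semipath: contradiction
      exfalso
      have hzverts : z ∈ D.verts := by
        rcases hadjz with h | h
        · exact edge_mem2 hor (hS _ h)
        · exact edge_mem1 hor (hS _ h)
      have hsp' : SPath D S (l ++ [z]) := by
        refine ⟨by simp, ?_, ?_, ?_⟩
        · intro q hq
          rcases List.mem_append.mp hq with h | h
          · exact hl.2.1 q h
          · simp at h; subst h; exact hzverts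
        · exact List.nodup_append'.mpr ⟨hl.2.2.1, by simp, by
            intro q hq hq'; simp at hq'; subst hq'; exact hzl hq⟩
        · refine List.isChain_append.mpr ⟨hl.2.2.2, by simp, ?_⟩
          intro p' hp' q hq
          simp at hq
          rw [hlast] at hp'; simp at hp'
          subst hp'; subst hq
          exact hadjz
      have hle : (l ++ [z]).length ≤ D.verts.card := hbd _ hsp'
      have hgr : ¬ PP (Nat.findGreatest PP D.verts.card + 1) :=
        Nat.findGreatest_is_greatest (n := D.verts.card) (by omega) (by simp at hle; omega)
      exact hgr ⟨l ++ [z], hsp', by simp [hlen]⟩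
  by_cases hpyS : (p, yend) ∈ S
  · refine ⟨(p, yend), hpyS, p, yend, Or.inl rfl, ?_⟩
    intro f hf hfy
    obtain ⟨fa, fb⟩ := f
    rcases hfy with hfy | hfy
    · simp at hfy; subst hfy
      have : fb = p := aux fb (Or.inl hf) (edge_ne hor (hS _ hf)).symm
      subst this
      exact absurd (hS _ hf) (edge_antisymm hor (hS _ hpyS))
    · simp at hfy; subst hfy
      have : fa = p := aux fa (Or.inr hf) (edge_ne hor (hS _ hf))
      subst this; rfl
  · have hyS : (yend, p) ∈ S := hadjpy.resolve_left hpyS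
    refine ⟨(yend, p), hyS, p, yend, Or.inr rfl, ?_⟩
    intro f hf hfy
    obtain ⟨fa, fb⟩ := f
    rcases hfy with hfy | hfy
    · simp at hfy; subst hfy
      have : fb = p := aux fb (Or.inl hf) (edge_ne hor (hS _ hf)).symm
      subst this; rfl
    · simp at hfy; subst hfy
      have : fa = p := aux fa (Or.inr hf) (edge_ne hor (hS _ hf))
      subst this
      exact absurd (hS _ hf) (fun h => hpyS hf)
lemma coloring_aux (hor : D.IsOriented) (hasem : D.Asemicyclic) :
    ∀ (n : ℕ) (S : Finset (ℕ × ℕ)), S.card = n → (∀ e ∈ S, e ∈ D.edges) →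
    (∀ v : ℕ, ∀ e1 e2 e3 : ℕ × ℕ, e1 ∈ S → e2 ∈ S → e3 ∈ S → e1 ≠ e2 → e1 ≠ e3 → e2 ≠ e3 →
      (e1.1 = v ∨ e1.2 = v) → (e2.1 = v ∨ e2.2 = v) → (e3.1 = v ∨ e3.2 = v) → False) →
    ∃ χ : ℕ × ℕ → YDir,
      (∀ e ∈ S, ∀ f ∈ S, e.2 = f.1 → χ e = χ f) ∧
      (∀ e ∈ S, ∀ f ∈ S, e ≠ f → e.1 = f.1 → χ e ≠ χ f) ∧
      (∀ e ∈ S, ∀ f ∈ S, e ≠ f → e.2 = f.2 → χ e ≠ χ f) := by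
  intro n
  induction n with
  | zero =>
    intro S hcard _ _
    have : S = ∅ := Finset.card_eq_zero.mp hcard
    subst this
    exact ⟨fun _ => YDir.N, by simp, by simp, by simp⟩
  | succ n ih =>
    intro S hcard hS hmax
    classical
    have hSne : S.Nonempty := Finset.card_pos.mp (by omega)
    obtain ⟨e₀, he₀, p, yend, he₀py, hleaf⟩ := exists_leaf hor hasem hS hSne
    have he₀E : e₀ ∈ D.edges := hS _ he₀
    have hpy : p ≠ yend := by
      rcases he₀py with rfl | rfl
      · exact edge_ne hor he₀E
      · exact (edge_ne hor he₀E).symm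
    obtain ⟨χ', hC1, hC2, hC3⟩ := ih (S.erase e₀)
      (by rw [Finset.card_erase_of_mem he₀]; omega)
      (fun e he => hS e (Finset.mem_of_mem_erase he))
      (fun v e1 e2 e3 h1 h2 h3 => hmax v e1 e2 e3 (Finset.mem_of_mem_erase h1)
        (Finset.mem_of_mem_erase h2) (Finset.mem_of_mem_erase h3))
    have hyfree : ∀ e ∈ S.erase e₀, ¬ (e.1 = yend ∨ e.2 = yend) := by
      intro e he h
      exact (Finset.ne_of_mem_erase he) (hleaf e (Finset.mem_of_mem_erase he) h)
    have he₀p : e₀.1 = p ∨ e₀.2 = p := by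
      rcases he₀py with rfl | rfl
      · exact Or.inl rfl
      · exact Or.inr rfl
    by_cases hnb : ∃ e' ∈ S.erase e₀, e'.1 = p ∨ e'.2 = p
    · obtain ⟨e₁, he₁, he₁p⟩ := hnb
      have he₁E : e₁ ∈ D.edges := hS _ (Finset.mem_of_mem_erase he₁)
      have he₁ne : e₁ ≠ e₀ := Finset.ne_of_mem_erase he₁
      have uniqp : ∀ f ∈ S.erase e₀, (f.1 = p ∨ f.2 = p) → f = e₁ := by
        intro f hf hfp
        by_contra hne
        exact hmax p e₀ e₁ f he₀ (Finset.mem_of_mem_erase he₁) (Finset.mem_of_mem_erase hf)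
          (Ne.symm he₁ne) (Ne.symm (Finset.ne_of_mem_erase hf)) (fun h => hne h.symm)
          he₀p he₁p hfp
      set val : YDir := if ((e₀.1 = p) ↔ (e₁.1 = p)) then yo (χ' e₁) else χ' e₁ with hval
      have hupd : ∀ f, f ≠ e₀ → Function.update χ' e₀ val f = χ' f :=
        fun f hf => Function.update_of_ne hf _ _
      have hupd0 : Function.update χ' e₀ val e₀ = val := Function.update_self _ _ _
      refine ⟨Function.update χ' e₀ val, ?_, ?_, ?_⟩
      · -- C1
        intro e he f hf h21
        by_cases hee : e₀ = e <;> by_cases hff : e₀ = f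
        · subst hee; subst hff
          exact absurd h21.symm (edge_ne hor he₀E)
        · subst hee
          have hf' : f ∈ S.erase e₀ := Finset.mem_erase.mpr ⟨fun h => hff h.symm, hf⟩
          rcases he₀py with he₀eq | he₀eq
          · exfalso
            apply hyfree f hf'
            left; rw [← h21, he₀eq]
          · have hfp : f = e₁ := uniqp f hf' (Or.inl (by rw [← h21, he₀eq]))
            have h1 : e₁.1 = p := by rw [← hfp, ← h21, he₀eq]
            have h0 : ¬ e₀.1 = p := by rw [he₀eq]; exact hpy.symm
            rw [hupd0, hupd f (fun h => hff h.symm), hfp, hval,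
              if_neg (fun hc => h0 (hc.mpr h1))]
        · subst hff
          have he' : e ∈ S.erase e₀ := Finset.mem_erase.mpr ⟨fun h => hee h.symm, he⟩
          rcases he₀py with he₀eq | he₀eq
          · have hep : e = e₁ := uniqp e he' (Or.inr (by rw [h21, he₀eq]))
            have h0 : e₀.1 = p := by rw [he₀eq]
            have h2 : e₁.2 = p := by rw [← hep, h21, he₀eq]
            have h1 : ¬ e₁.1 = p := fun h1 => edge_ne hor he₁E (h1.trans h2.symm)
            rw [hupd e (fun h => hee h.symm), hupd0, hep, hval,
              if_neg (fun hc => h1 (hc.mp h0))]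
          · exfalso
            apply hyfree e he'
            right; rw [h21, he₀eq]
        · rw [hupd e (fun h => hee h.symm), hupd f (fun h => hff h.symm)]
          exact hC1 e (Finset.mem_erase.mpr ⟨fun h => hee h.symm, he⟩)
            f (Finset.mem_erase.mpr ⟨fun h => hff h.symm, hf⟩) h21
      · -- C2
        intro e he f hf hef h11
        by_cases hee : e₀ = e <;> by_cases hff : e₀ = f
        · subst hee; subst hff; exact absurd rfl hef
        · subst hee
          have hf' : f ∈ S.erase e₀ := Finset.mem_erase.mpr ⟨fun h => hff h.symm, hf⟩
          rcases he₀py with he₀eq | he₀eq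
          · have hfp : f = e₁ := uniqp f hf' (Or.inl (by rw [← h11, he₀eq]))
            have h0 : e₀.1 = p := by rw [he₀eq]
            have h1 : e₁.1 = p := by rw [← hfp, ← h11, he₀eq]
            rw [hupd0, hupd f (fun h => hff h.symm), hfp, hval,
              if_pos (iff_of_true h0 h1)]
            exact yo_ne _
          · exfalso
            apply hyfree f hf'
            left; rw [← h11, he₀eq]
        · subst hff
          have he' : e ∈ S.erase e₀ := Finset.mem_erase.mpr ⟨fun h => hee h.symm, he⟩
          rcases he₀py with he₀eq | he₀eq
          · have hep : e = e₁ := uniqp e he' (Or.inl (by rw [h11, he₀eq]))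
            have h0 : e₀.1 = p := by rw [he₀eq]
            have h1 : e₁.1 = p := by rw [← hep, h11, he₀eq]
            rw [hupd e (fun h => hee h.symm), hupd0, hep, hval,
              if_pos (iff_of_true h0 h1)]
            exact (yo_ne _).symm
          · exfalso
            apply hyfree e he'
            left; rw [h11, he₀eq]
        · rw [hupd e (fun h => hee h.symm), hupd f (fun h => hff h.symm)]
          exact hC2 e (Finset.mem_erase.mpr ⟨fun h => hee h.symm, he⟩)
            f (Finset.mem_erase.mpr ⟨fun h => hff h.symm, hf⟩) hef h11
      · -- C3
        intro e he f hf hef h22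
        by_cases hee : e₀ = e <;> by_cases hff : e₀ = f
        · subst hee; subst hff; exact absurd rfl hef
        · subst hee
          have hf' : f ∈ S.erase e₀ := Finset.mem_erase.mpr ⟨fun h => hff h.symm, hf⟩
          rcases he₀py with he₀eq | he₀eq
          · exfalso
            apply hyfree f hf'
            right; rw [← h22, he₀eq]
          · have hfp : f = e₁ := uniqp f hf' (Or.inr (by rw [← h22, he₀eq]))
            have h0 : ¬ e₀.1 = p := by rw [he₀eq]; exact hpy.symm
            have h2 : e₁.2 = p := by rw [← hfp, ← h22, he₀eq]
            have h1 : ¬ e₁.1 = p := fun h1 => edge_ne hor he₁E (h1.trans h2.symm)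
            rw [hupd0, hupd f (fun h => hff h.symm), hfp, hval,
              if_pos (iff_of_false h0 h1)]
            exact yo_ne _
        · subst hff
          have he' : e ∈ S.erase e₀ := Finset.mem_erase.mpr ⟨fun h => hee h.symm, he⟩
          rcases he₀py with he₀eq | he₀eq
          · exfalso
            apply hyfree e he'
            right; rw [h22, he₀eq]
          · have hep : e = e₁ := uniqp e he' (Or.inr (by rw [h22, he₀eq]))
            have h0 : ¬ e₀.1 = p := by rw [he₀eq]; exact hpy.symm
            have h2 : e₁.2 = p := by rw [← hep, h22, he₀eq]
            have h1 : ¬ e₁.1 = p := fun h1 => edge_ne hor he₁E (h1.trans h2.symm)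
            rw [hupd e (fun h => hee h.symm), hupd0, hep, hval,
              if_pos (iff_of_false h0 h1)]
            exact (yo_ne _).symm
        · rw [hupd e (fun h => hee h.symm), hupd f (fun h => hff h.symm)]
          exact hC3 e (Finset.mem_erase.mpr ⟨fun h => hee h.symm, he⟩)
            f (Finset.mem_erase.mpr ⟨fun h => hff h.symm, hf⟩) hef h22
    · push_neg at hnb
      have hupd : ∀ f, f ≠ e₀ → Function.update χ' e₀ YDir.N f = χ' f :=
        fun f hf => Function.update_of_ne hf _ _
      have hshared : ∀ f ∈ S.erase e₀,
          (f.1 = e₀.1 ∨ f.2 = e₀.1 ∨ f.1 = e₀.2 ∨ f.2 = e₀.2) → False := by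
        intro f hf h
        have hnp : ¬ (f.1 = p ∨ f.2 = p) := by
          intro h'
          rcases h' with h' | h'
          · exact (hnb f hf).1 h'
          · exact (hnb f hf).2 h'
        have hny := hyfree f hf
        rcases he₀py with rfl | rfl <;> rcases h with h | h | h | h
        · exact hnp (Or.inl h)
        · exact hnp (Or.inr h)
        · exact hny (Or.inl h)
        · exact hny (Or.inr h)
        · exact hny (Or.inl h)
        · exact hny (Or.inr h)
        · exact hnp (Or.inl h)
        · exact hnp (Or.inr h)
      refine ⟨Function.update χ' e₀ YDir.N, ?_, ?_, ?_⟩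
      · intro e he f hf h21
        by_cases hee : e₀ = e <;> by_cases hff : e₀ = f
        · subst hee; subst hff
          exact absurd h21.symm (edge_ne hor he₀E)
        · subst hee
          exact absurd (hshared f (Finset.mem_erase.mpr ⟨fun h => hff h.symm, hf⟩)
            (Or.inr (Or.inr (Or.inl h21.symm)))) not_false
        · subst hff
          exact absurd (hshared e (Finset.mem_erase.mpr ⟨fun h => hee h.symm, he⟩)
            (Or.inr (Or.inl h21))) not_false
        · rw [hupd e (fun h => hee h.symm), hupd f (fun h => hff h.symm)]
          exact hC1 e (Finset.mem_erase.mpr ⟨fun h => hee h.symm, he⟩)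
            f (Finset.mem_erase.mpr ⟨fun h => hff h.symm, hf⟩) h21
      · intro e he f hf hef h11
        by_cases hee : e₀ = e <;> by_cases hff : e₀ = f
        · subst hee; subst hff; exact absurd rfl hef
        · subst hee
          exact absurd (hshared f (Finset.mem_erase.mpr ⟨fun h => hff h.symm, hf⟩)
            (Or.inl h11.symm)) not_false
        · subst hff
          exact absurd (hshared e (Finset.mem_erase.mpr ⟨fun h => hee h.symm, he⟩)
            (Or.inl h11)) not_false
        · rw [hupd e (fun h => hee h.symm), hupd f (fun h => hff h.symm)]
          exact hC2 e (Finset.mem_erase.mpr ⟨fun h => hee h.symm, he⟩)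
            f (Finset.mem_erase.mpr ⟨fun h => hff h.symm, hf⟩) hef h11
      · intro e he f hf hef h22
        by_cases hee : e₀ = e <;> by_cases hff : e₀ = f
        · subst hee; subst hff; exact absurd rfl hef
        · subst hee
          exact absurd (hshared f (Finset.mem_erase.mpr ⟨fun h => hff h.symm, hf⟩)
            (Or.inr (Or.inr (Or.inr h22.symm)))) not_false
        · subst hff
          exact absurd (hshared e (Finset.mem_erase.mpr ⟨fun h => hee h.symm, he⟩)
            (Or.inr (Or.inr (Or.inr h22)))) not_false
        · rw [hupd e (fun h => hee h.symm), hupd f (fun h => hff h.symm)]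
          exact hC3 e (Finset.mem_erase.mpr ⟨fun h => hee h.symm, he⟩)
            f (Finset.mem_erase.mpr ⟨fun h => hff h.symm, hf⟩) hef h22
open Classical in
noncomputable def pickEdge (P : (ℕ × ℕ) → Prop) : ℕ × ℕ :=
  if h : ∃ e, P e then h.choose else (0,0)

lemma pickEdge_spec {P : (ℕ × ℕ) → Prop} (h : ∃ e, P e) : P (pickEdge P) := by
  rw [pickEdge, dif_pos h]
  exact h.choose_spec

open Classical in
noncomputable def outSelN (D : DG) (χ : ℕ × ℕ → YDir) (a : ℕ) : ℕ × ℕ :=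
  if ∃ e, e ∈ D.edges ∧ e.1 = a ∧ TransHC D e ∧ χ e = YDir.N then
    pickEdge (fun e => e ∈ D.edges ∧ e.1 = a ∧ TransHC D e ∧ χ e = YDir.N)
  else if ∃ e, e ∈ D.edges ∧ e.1 = a ∧ ¬(TransHC D e ∧ χ e = YDir.S) then
    pickEdge (fun e => e ∈ D.edges ∧ e.1 = a ∧ ¬(TransHC D e ∧ χ e = YDir.S))
  else pickEdge (fun e => e ∈ D.edges ∧ e.1 = a)

open Classical in
noncomputable def outSelS (D : DG) (χ : ℕ × ℕ → YDir) (a : ℕ) : ℕ × ℕ :=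
  if ∃ e, e ∈ D.edges ∧ e.1 = a ∧ TransHC D e ∧ χ e = YDir.S then
    pickEdge (fun e => e ∈ D.edges ∧ e.1 = a ∧ TransHC D e ∧ χ e = YDir.S)
  else if ∃ e, e ∈ D.edges ∧ e.1 = a ∧ e ≠ outSelN D χ a then
    pickEdge (fun e => e ∈ D.edges ∧ e.1 = a ∧ e ≠ outSelN D χ a)
  else pickEdge (fun e => e ∈ D.edges ∧ e.1 = a)

open Classical in
noncomputable def inSelN (D : DG) (χ : ℕ × ℕ → YDir) (b : ℕ) : ℕ × ℕ :=
  if ∃ e, e ∈ D.edges ∧ e.2 = b ∧ TransHC D e ∧ χ e = YDir.S then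
    pickEdge (fun e => e ∈ D.edges ∧ e.2 = b ∧ TransHC D e ∧ χ e = YDir.S)
  else if ∃ e, e ∈ D.edges ∧ e.2 = b ∧ ¬(TransHC D e ∧ χ e = YDir.N) then
    pickEdge (fun e => e ∈ D.edges ∧ e.2 = b ∧ ¬(TransHC D e ∧ χ e = YDir.N))
  else pickEdge (fun e => e ∈ D.edges ∧ e.2 = b)

open Classical in
noncomputable def inSelS (D : DG) (χ : ℕ × ℕ → YDir) (b : ℕ) : ℕ × ℕ :=
  if ∃ e, e ∈ D.edges ∧ e.2 = b ∧ TransHC D e ∧ χ e = YDir.N then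
    pickEdge (fun e => e ∈ D.edges ∧ e.2 = b ∧ TransHC D e ∧ χ e = YDir.N)
  else if ∃ e, e ∈ D.edges ∧ e.2 = b ∧ e ≠ inSelN D χ b then
    pickEdge (fun e => e ∈ D.edges ∧ e.2 = b ∧ e ≠ inSelN D χ b)
  else pickEdge (fun e => e ∈ D.edges ∧ e.2 = b)

section SelFacts

variable {χ : ℕ × ℕ → YDir}

lemma outSelN_mem {a : ℕ} (h : ∃ e, e ∈ D.edges ∧ e.1 = a) :
    outSelN D χ a ∈ D.edges ∧ (outSelN D χ a).1 = a := by
  rw [outSelN]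
  split_ifs with h1 h2
  · have := pickEdge_spec h1; exact ⟨this.1, this.2.1⟩
  · have := pickEdge_spec h2; exact ⟨this.1, this.2.1⟩
  · have := pickEdge_spec h; exact ⟨this.1, this.2⟩

lemma outSelS_mem {a : ℕ} (h : ∃ e, e ∈ D.edges ∧ e.1 = a) :
    outSelS D χ a ∈ D.edges ∧ (outSelS D χ a).1 = a := by
  rw [outSelS]
  split_ifs with h1 h2
  · have := pickEdge_spec h1; exact ⟨this.1, this.2.1⟩
  · have := pickEdge_spec h2; exact ⟨this.1, this.2.1⟩
  · have := pickEdge_spec h; exact ⟨this.1, this.2⟩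

lemma inSelN_mem {b : ℕ} (h : ∃ e, e ∈ D.edges ∧ e.2 = b) :
    inSelN D χ b ∈ D.edges ∧ (inSelN D χ b).2 = b := by
  rw [inSelN]
  split_ifs with h1 h2
  · have := pickEdge_spec h1; exact ⟨this.1, this.2.1⟩
  · have := pickEdge_spec h2; exact ⟨this.1, this.2.1⟩
  · have := pickEdge_spec h; exact ⟨this.1, this.2⟩

lemma inSelS_mem {b : ℕ} (h : ∃ e, e ∈ D.edges ∧ e.2 = b) :
    inSelS D χ b ∈ D.edges ∧ (inSelS D χ b).2 = b := by
  rw [inSelS]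
  split_ifs with h1 h2
  · have := pickEdge_spec h1; exact ⟨this.1, this.2.1⟩
  · have := pickEdge_spec h2; exact ⟨this.1, this.2.1⟩
  · have := pickEdge_spec h; exact ⟨this.1, this.2⟩

lemma outSelN_unique {a b : ℕ} (hab : (a,b) ∈ D.edges)
    (huniq : ∀ g ∈ D.edges, g.1 = a → g = (a,b)) : outSelN D χ a = (a,b) := by
  obtain ⟨h1, h2⟩ := outSelN_mem (χ := χ) ⟨(a,b), hab, rfl⟩
  exact huniq _ h1 h2

lemma outSelS_unique {a b : ℕ} (hab : (a,b) ∈ D.edges)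
    (huniq : ∀ g ∈ D.edges, g.1 = a → g = (a,b)) : outSelS D χ a = (a,b) := by
  obtain ⟨h1, h2⟩ := outSelS_mem (χ := χ) ⟨(a,b), hab, rfl⟩
  exact huniq _ h1 h2

lemma inSelN_unique {d c : ℕ} (hcd : (c,d) ∈ D.edges)
    (huniq : ∀ g ∈ D.edges, g.2 = d → g = (c,d)) : inSelN D χ d = (c,d) := by
  obtain ⟨h1, h2⟩ := inSelN_mem (χ := χ) ⟨(c,d), hcd, rfl⟩
  exact huniq _ h1 h2

lemma inSelS_unique {d c : ℕ} (hcd : (c,d) ∈ D.edges)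
    (huniq : ∀ g ∈ D.edges, g.2 = d → g = (c,d)) : inSelS D χ d = (c,d) := by
  obtain ⟨h1, h2⟩ := inSelS_mem (χ := χ) ⟨(c,d), hcd, rfl⟩
  exact huniq _ h1 h2

variable (hC2 : ∀ e f, TransHC D e → TransHC D f → e ≠ f → e.1 = f.1 → χ e ≠ χ f)
variable (hC3 : ∀ e f, TransHC D e → TransHC D f → e ≠ f → e.2 = f.2 → χ e ≠ χ f)

lemma outSelN_trans (hC2 : ∀ e f, TransHC D e → TransHC D f → e ≠ f → e.1 = f.1 → χ e ≠ χ f)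
    {a b : ℕ} (ht : TransHC D (a,b)) (hχ : χ (a,b) = YDir.N) : outSelN D χ a = (a,b) := by
  rw [outSelN]
  have hw : ∃ e, e ∈ D.edges ∧ e.1 = a ∧ TransHC D e ∧ χ e = YDir.N :=
    ⟨(a,b), ht.1, rfl, ht, hχ⟩
  rw [if_pos hw]
  have hspec := pickEdge_spec hw
  by_contra hne
  exact hC2 _ _ hspec.2.2.1 ht hne hspec.2.1 (hspec.2.2.2.trans hχ.symm)

lemma outSelS_trans (hC2 : ∀ e f, TransHC D e → TransHC D f → e ≠ f → e.1 = f.1 → χ e ≠ χ f)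
    {a b : ℕ} (ht : TransHC D (a,b)) (hχ : χ (a,b) = YDir.S) : outSelS D χ a = (a,b) := by
  rw [outSelS]
  have hw : ∃ e, e ∈ D.edges ∧ e.1 = a ∧ TransHC D e ∧ χ e = YDir.S :=
    ⟨(a,b), ht.1, rfl, ht, hχ⟩
  rw [if_pos hw]
  have hspec := pickEdge_spec hw
  by_contra hne
  exact hC2 _ _ hspec.2.2.1 ht hne hspec.2.1 (hspec.2.2.2.trans hχ.symm)

lemma inSelN_trans (hC3 : ∀ e f, TransHC D e → TransHC D f → e ≠ f → e.2 = f.2 → χ e ≠ χ f)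
    {c d : ℕ} (ht : TransHC D (c,d)) (hχ : χ (c,d) = YDir.S) : inSelN D χ d = (c,d) := by
  rw [inSelN]
  have hw : ∃ e, e ∈ D.edges ∧ e.2 = d ∧ TransHC D e ∧ χ e = YDir.S :=
    ⟨(c,d), ht.1, rfl, ht, hχ⟩
  rw [if_pos hw]
  have hspec := pickEdge_spec hw
  by_contra hne
  exact hC3 _ _ hspec.2.2.1 ht hne hspec.2.1 (hspec.2.2.2.trans hχ.symm)

lemma inSelS_trans (hC3 : ∀ e f, TransHC D e → TransHC D f → e ≠ f → e.2 = f.2 → χ e ≠ χ f)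
    {c d : ℕ} (ht : TransHC D (c,d)) (hχ : χ (c,d) = YDir.N) : inSelS D χ d = (c,d) := by
  rw [inSelS]
  have hw : ∃ e, e ∈ D.edges ∧ e.2 = d ∧ TransHC D e ∧ χ e = YDir.N :=
    ⟨(c,d), ht.1, rfl, ht, hχ⟩
  rw [if_pos hw]
  have hspec := pickEdge_spec hw
  by_contra hne
  exact hC3 _ _ hspec.2.2.1 ht hne hspec.2.1 (hspec.2.2.2.trans hχ.symm)

lemma outSel_ne (hC2 : ∀ e f, TransHC D e → TransHC D f → e ≠ f → e.1 = f.1 → χ e ≠ χ f)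
    {a : ℕ} {g1 g2 : ℕ × ℕ} (hg1 : g1 ∈ D.edges) (hg2 : g2 ∈ D.edges)
    (hg1a : g1.1 = a) (hg2a : g2.1 = a) (hgg : g1 ≠ g2) :
    outSelN D χ a ≠ outSelS D χ a := by
  rw [outSelS]
  split_ifs with h1 h2
  · -- S-branch 1
    have hS := pickEdge_spec h1
    rw [outSelN]
    split_ifs with hn1 hn2
    · have hN := pickEdge_spec hn1
      intro heq
      have : YDir.N = YDir.S := by
        rw [← hN.2.2.2, heq, hS.2.2.2]
      exact YDir.noConfusion this
    · have hN := pickEdge_spec hn2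
      intro heq
      exact hN.2.2 (by rw [heq]; exact ⟨hS.2.2.1, hS.2.2.2⟩)
    · exfalso
      push_neg at hn2
      have hh1 := hn2 g1 hg1 hg1a
      have hh2 := hn2 g2 hg2 hg2a
      exact hC2 g1 g2 hh1.1 hh2.1 hgg (hg1a.trans hg2a.symm) (hh1.2.trans hh2.2.symm)
  · exact fun heq => (pickEdge_spec h2).2.2 heq.symm
  · exfalso
    push_neg at h2
    have e1 := h2 g1 hg1 hg1a
    have e2 := h2 g2 hg2 hg2a
    exact hgg (e1.trans e2.symm)

lemma inSel_ne (hC3 : ∀ e f, TransHC D e → TransHC D f → e ≠ f → e.2 = f.2 → χ e ≠ χ f)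
    {b : ℕ} {g1 g2 : ℕ × ℕ} (hg1 : g1 ∈ D.edges) (hg2 : g2 ∈ D.edges)
    (hg1a : g1.2 = b) (hg2a : g2.2 = b) (hgg : g1 ≠ g2) :
    inSelN D χ b ≠ inSelS D χ b := by
  rw [inSelS]
  split_ifs with h1 h2
  · have hS := pickEdge_spec h1
    rw [inSelN]
    split_ifs with hn1 hn2
    · have hN := pickEdge_spec hn1
      intro heq
      have : YDir.S = YDir.N := by
        rw [← hN.2.2.2, heq, hS.2.2.2]
      exact YDir.noConfusion this
    · have hN := pickEdge_spec hn2
      intro heq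
      exact hN.2.2 (by rw [heq]; exact ⟨hS.2.2.1, hS.2.2.2⟩)
    · exfalso
      push_neg at hn2
      have hh1 := hn2 g1 hg1 hg1a
      have hh2 := hn2 g2 hg2 hg2a
      exact hC3 g1 g2 hh1.1 hh2.1 hgg (hg1a.trans hg2a.symm) (hh1.2.trans hh2.2.symm)
  · exact fun heq => (pickEdge_spec h2).2.2 heq.symm
  · exfalso
    push_neg at h2
    have e1 := h2 g1 hg1 hg1a
    have e2 := h2 g2 hg2 hg2a
    exact hgg (e1.trans e2.symm)

end SelFacts
noncomputable def mkLab (D : DG) (χ : ℕ × ℕ → YDir) : Lab := fun a Y X =>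
  match Y, X with
  | YDir.N, XDir.E => outSelN D χ a
  | YDir.S, XDir.E => outSelS D χ a
  | YDir.N, XDir.W => inSelN D χ a
  | YDir.S, XDir.W => inSelS D χ a

lemma chi_run {χ : ℕ × ℕ → YDir} (hor : D.IsOriented) (hasem : D.Asemicyclic)
    (hC1 : ∀ e f, TransHC D e → TransHC D f → e.2 = f.1 → χ e = χ f) :
    ∀ (t : List ℕ) (a b d c : ℕ) (t' : List ℕ), D.IsPath (a::b::t) →
      (a::b::t).reverse = d::c::t' → Hot D a → Cold D d →
      Cold D a ∧ TransHC D (a,b) ∧ TransHC D (c,d) ∧ χ (a,b) = χ (c,d) := by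
  intro t
  induction t with
  | nil =>
    intro a b d c t' hp hrev hhot hcold
    have hab : (a,b) ∈ D.edges := first_edge_of_path hp rfl
    have hdb : d = b ∧ c = a := by
      have h5 : ([a,b] : List ℕ).reverse = b :: a :: ([] : List ℕ) := by simp
      rw [h5] at hrev
      injection hrev with e1 hrev
      injection hrev with e2 _
      exact ⟨e1.symm, e2.symm⟩
    obtain ⟨rfl, rfl⟩ := hdb
    exact ⟨cold_step hor hasem hab hcold, ⟨hab, hhot, hcold⟩, ⟨hab, hhot, hcold⟩, rfl⟩
  | cons e2 t₂ ih =>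
    intro a b d c t' hp hrev hhot hcold
    have hab : (a,b) ∈ D.edges := first_edge_of_path hp rfl
    have hhb : Hot D b := hot_step hor hasem hhot hab
    obtain ⟨d₂, c₂, t₂', hrev₂⟩ := rev_decomp (l := b::e2::t₂) rfl
    have h5 : (a::b::e2::t₂).reverse = d₂::c₂::(t₂' ++ [a]) := by
      rw [List.reverse_cons, hrev₂]; simp
    have hdc : d = d₂ ∧ c = c₂ := by
      rw [h5] at hrev
      injection hrev with f1 hrev
      injection hrev with f2 _
      exact ⟨f1.symm, f2.symm⟩
    obtain ⟨rfl, rfl⟩ := hdc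
    obtain ⟨ih1, ih2, ih3, ih4⟩ :=
      ih b e2 d c t₂' (path_tail hp (by simp)) hrev₂ hhb hcold
    have hTab : TransHC D (a,b) := ⟨hab, hhot, ih1⟩
    exact ⟨cold_step hor hasem hab ih1, hTab, ih3,
      (hC1 (a,b) (b,e2) hTab ih2 rfl).trans ih4⟩

lemma decent_backward {χ : ℕ × ℕ → YDir} (hor : D.IsOriented) (hasem : D.Asemicyclic)
    (hC1 : ∀ e f, TransHC D e → TransHC D f → e.2 = f.1 → χ e = χ f)
    (hC2 : ∀ e f, TransHC D e → TransHC D f → e ≠ f → e.1 = f.1 → χ e ≠ χ f)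
    (hC3 : ∀ e f, TransHC D e → TransHC D f → e ≠ f → e.2 = f.2 → χ e ≠ χ f) :
    ∀ l, D.IsPath l → ∀ Y : YDir, Ydecent (mkLab D χ) Y l := by
  intro l hl Y a b t heq
  subst heq
  have hab : (a,b) ∈ D.edges := first_edge_of_path hl rfl
  obtain ⟨d, c, t', hrev⟩ := rev_decomp (l := a::b::t) rfl
  have hcd : (c,d) ∈ D.edges := last_edge_of_path hl hrev
  by_cases hout : ∀ g ∈ D.edges, g.1 = a → g = (a,b)
  · left
    cases Y
    · exact outSelN_unique hab hout
    · exact outSelS_unique hab hout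
  · push_neg at hout
    obtain ⟨g, hg, hga, hgne⟩ := hout
    have hg' : (a, g.2) ∈ D.edges := by rw [← hga, Prod.mk.eta]; exact hg
    have hhot : Hot D a :=
      hot_base hor hab hg' (fun hbg2 => hgne (Prod.ext hga hbg2.symm))
    by_cases hin : ∀ g ∈ D.edges, g.2 = d → g = (c,d)
    · right
      refine ⟨c, d, t', hrev, ?_⟩
      cases Y
      · exact inSelN_unique hcd hin
      · exact inSelS_unique hcd hin
    · push_neg at hin
      obtain ⟨g2, hg2, hg2d, hg2ne⟩ := hin
      have hg2' : (g2.1, d) ∈ D.edges := by rw [← hg2d, Prod.mk.eta]; exact hg2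
      have hcold : Cold D d :=
        cold_base hor hcd hg2' (fun hcg => hg2ne (Prod.ext hcg.symm hg2d))
      obtain ⟨_, hT1, hT2, hχeq⟩ := chi_run hor hasem hC1 t a b d c t' hl hrev hhot hcold
      rcases ydir_eq_or Y (χ (a,b)) with rfl | hYo
      · left
        cases hv : χ (a, b)
        · exact outSelN_trans hC2 hT1 hv
        · exact outSelS_trans hC2 hT1 hv
      · right
        refine ⟨c, d, t', hrev, ?_⟩
        rw [hYo, hχeq]
        cases hv : χ (c, d)
        · exact inSelS_trans hC3 hT2 hv
        · exact inSelN_trans hC3 hT2 hv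

lemma backward (hK : IsKGraph D) : ∃ L : Lab, IsLocalCompass D L := by
  obtain ⟨hor, hwc, hasem, hwef, hinner, hbif⟩ := hK
  classical
  set S : Finset (ℕ × ℕ) := D.edges.filter (fun e => TransHC D e) with hSdef
  have hSsub : ∀ e ∈ S, e ∈ D.edges := fun e he => (Finset.mem_filter.mp he).1
  have hStrans : ∀ e ∈ S, TransHC D e := fun e he => (Finset.mem_filter.mp he).2
  have hmemS : ∀ e, TransHC D e → e ∈ S := fun e he => Finset.mem_filter.mpr ⟨he.1, he⟩
  have hmax : ∀ v : ℕ, ∀ e1 e2 e3 : ℕ × ℕ, e1 ∈ S → e2 ∈ S → e3 ∈ S →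
      e1 ≠ e2 → e1 ≠ e3 → e2 ≠ e3 →
      (e1.1 = v ∨ e1.2 = v) → (e2.1 = v ∨ e2.2 = v) → (e3.1 = v ∨ e3.2 = v) → False := by
    intro v e1 e2 e3 h1 h2 h3 n12 n13 n23 i1 i2 i3
    have mkT : ∀ e ∈ S, Transversal D e := by
      intro e he
      have hT := hStrans e he
      have := transHC_transversal hor hasem
        (show (e.1, e.2) ∈ D.edges by rw [Prod.mk.eta]; exact hT.1) hT.2.1 hT.2.2
      rwa [Prod.mk.eta] at this
    exact hbif e1 e2 e3
      ⟨hSsub _ h1, hSsub _ h2, hSsub _ h3, n12, n13, n23, v,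
        i1.imp Eq.symm Eq.symm, i2.imp Eq.symm Eq.symm, i3.imp Eq.symm Eq.symm⟩
      ⟨mkT _ h1, mkT _ h2, mkT _ h3⟩
  obtain ⟨χ, hc1, hc2, hc3⟩ := coloring_aux hor hasem S.card S rfl hSsub hmax
  have hC1 : ∀ e f, TransHC D e → TransHC D f → e.2 = f.1 → χ e = χ f :=
    fun e f he hf => hc1 e (hmemS e he) f (hmemS f hf)
  have hC2 : ∀ e f, TransHC D e → TransHC D f → e ≠ f → e.1 = f.1 → χ e ≠ χ f :=
    fun e f he hf => hc2 e (hmemS e he) f (hmemS f hf)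
  have hC3 : ∀ e f, TransHC D e → TransHC D f → e ≠ f → e.2 = f.2 → χ e ≠ χ f :=
    fun e f he hf => hc3 e (hmemS e he) f (hmemS f hf)
  refine ⟨mkLab D χ, hor, ?_, hwc, hasem, hwef, hinner, ?_, ?_⟩
  · -- ProperLab
    rintro a ⟨hav, ⟨bin, hbin⟩, ⟨bout, hbout⟩⟩ Y
    have hinw : ∃ e, e ∈ D.edges ∧ e.2 = a := ⟨(bin, a), hbin, rfl⟩
    have hine : ∃ e, e ∈ D.edges ∧ e.1 = a := ⟨(a, bout), hbout, rfl⟩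
    cases Y
    · exact ⟨(inSelN_mem hinw).1, (inSelN_mem hinw).2, (outSelN_mem hine).1,
        (outSelN_mem hine).2⟩
    · exact ⟨(inSelS_mem hinw).1, (inSelS_mem hinw).2, (outSelS_mem hine).1,
        (outSelS_mem hine).2⟩
  · -- SeparatesNS
    intro a hin
    constructor
    · intro hcard
      obtain ⟨y, z, hy, hz, hyz⟩ := card_two_in hcard
      exact inSel_ne hC3 hy hz rfl rfl (fun h => hyz (Prod.ext_iff.mp h).1)
    · intro hcard
      obtain ⟨u1, u2, hu1, hu2, hu⟩ := card_two_out hcard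
      exact outSel_ne hC2 hu1 hu2 rfl rfl (fun h => hu (Prod.ext_iff.mp h).2)
  · intro l hl
    exact ⟨decent_backward hor hasem hC1 hC2 hC3 l hl YDir.N,
      decent_backward hor hasem hC1 hC2 hC3 l hl YDir.S⟩
end Prop52

/-- Proposition 5.2: an oriented graph is a local K-graph iff it is a
K-graph. -/
theorem local_iff_K (D : DG) (hD : D.IsOriented) :
    (∃ L : Lab, IsLocalCompass D L) ↔ IsKGraph D := by
  constructor
  · rintro ⟨L, hor, hprop, hwc, hasem, hwef, hinner, hsep, hdec⟩
    exact ⟨hor, hwc, hasem, hwef, hinner,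
      Prop52.no_trans_bif hor hasem hwef hsep hdec⟩
  · exact Prop52.backward
end PluralCuts
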